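/- arXiv:2004.06742 — 2 statements merged into one kernel-verified Lean document; each statement's English description precedes it below -/
import Mathlib

section
/- Assume (H1) and (H2). For every ergodic σ-invariant Borel probability measure ν on Σ there exist ergodic F-invariant Borel probability measures μ₁ and μ₂ on Γ with π_*μ₁ = ν = π_*μ₂ such that χ(μ₁) ≤ 0 and χ(μ₂) ≥ 0. -/
open Set MeasureTheory Filter
open scoped ENNReal


namespace DGRAux

set_option linter.unusedSectionVars false

section MET

variable {α : Type*} [MeasurableSpace α] {μ : Measure α} [IsProbabilityMeasure μ]
variable {T : α → α} {F : α → ℝ}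

/-- `metQ T F N x = max_{0 ≤ n ≤ N} S_n F x` (Garsia's auxiliary function). -/
noncomputable def metQ (T : α → α) (F : α → ℝ) : ℕ → α → ℝ
  | 0 => fun _ => 0
  | (N+1) => fun x => max 0 (F x + metQ T F N (T x))

lemma metQ_nonneg (N : ℕ) (x : α) : 0 ≤ metQ T F N x := by
  cases N with
  | zero => exact le_refl 0
  | succ N => exact le_max_left _ _

lemma metQ_mono (N : ℕ) (x : α) : metQ T F N x ≤ metQ T F (N+1) x := by
  induction N generalizing x with
  | zero => exact metQ_nonneg 1 x
  | succ N ih =>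
      exact max_le_max (le_refl 0) (add_le_add (le_refl _) (ih (T x)))

lemma metQ_mono' {M N : ℕ} (h : M ≤ N) (x : α) : metQ T F M x ≤ metQ T F N x := by
  induction N with
  | zero => simp_all
  | succ N ih =>
      rcases Nat.lt_or_ge M (N+1) with h' | h'
      · exact le_trans (ih (Nat.lt_succ_iff.mp h')) (metQ_mono N x)
      · have : M = N + 1 := le_antisymm h h'
        simp [this]

lemma metQ_measurable (hT : Measurable T) (hF : Measurable F) (N : ℕ) :
    Measurable (metQ T F N) := by
  induction N with
  | zero => exact measurable_const
  | succ N ih => exact (measurable_const.max (hF.add (ih.comp hT)))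

lemma integral_comp_mp (hT : MeasurePreserving T μ μ) {g : α → ℝ}
    (hg : AEStronglyMeasurable g μ) : ∫ x, g (T x) ∂μ = ∫ x, g x ∂μ := by
  have hg' : AEStronglyMeasurable g (Measure.map T μ) := by rw [hT.map_eq]; exact hg
  have h := integral_map hT.aemeasurable hg'
  rw [hT.map_eq] at h
  exact h.symm

lemma metQ_integrable (hT : MeasurePreserving T μ μ) (hF : Measurable F)
    (hFi : Integrable F μ) (N : ℕ) : Integrable (metQ T F N) μ := by
  induction N with
  | zero => exact integrable_const 0
  | succ N ih =>
      have h1 : Integrable (fun x => F x + metQ T F N (T x)) μ :=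
        hFi.add ((hT.integrable_comp ih.aestronglyMeasurable).mpr ih)
      show Integrable (fun x => max 0 (F x + metQ T F N (T x))) μ
      simpa [max_comm] using h1.pos_part

lemma birkhoffSum_le_metQ {N n : ℕ} (hn : n ≤ N) (x : α) :
    birkhoffSum T F n x ≤ metQ T F N x := by
  induction N generalizing n x with
  | zero =>
      have : n = 0 := Nat.le_zero.mp hn
      simp [this, birkhoffSum, metQ]
  | succ N ih =>
      cases n with
      | zero => simpa [birkhoffSum] using metQ_nonneg (N+1) x
      | succ m =>
          have h1 : birkhoffSum T F (m+1) x = F x + birkhoffSum T F m (T x) :=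
            birkhoffSum_succ' T F m x
          have h2 : birkhoffSum T F m (T x) ≤ metQ T F N (T x) :=
            ih (Nat.succ_le_succ_iff.mp hn) (T x)
          calc birkhoffSum T F (m+1) x = F x + birkhoffSum T F m (T x) := h1
            _ ≤ F x + metQ T F N (T x) := by linarith
            _ ≤ max 0 (F x + metQ T F N (T x)) := le_max_right _ _

/-- The increasing family of sets in the maximal ergodic theorem. -/
def metA (T : α → α) (F : α → ℝ) (N : ℕ) : Set α := {x | 0 < F x + metQ T F N (T x)}

lemma metA_mono : Monotone (metA T F) := by
  intro M N h x hx
  exact lt_of_lt_of_le hx (add_le_add (le_refl _) (metQ_mono' h (T x)))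

lemma mem_metA_union {x : α} {n : ℕ} (hn : 1 ≤ n) (hS : 0 < birkhoffSum T F n x) :
    x ∈ ⋃ N, metA T F N := by
  obtain ⟨m, rfl⟩ : ∃ m, n = m + 1 := ⟨n - 1, by omega⟩
  have h1 : birkhoffSum T F (m+1) x = F x + birkhoffSum T F m (T x) :=
    birkhoffSum_succ' T F m x
  have h2 : birkhoffSum T F m (T x) ≤ metQ T F m (T x) := birkhoffSum_le_metQ (le_refl m) (T x)
  exact mem_iUnion.mpr ⟨m, by simp only [metA, mem_setOf_eq]; linarith⟩

lemma metA_measurable (hT : Measurable T) (hF : Measurable F) (N : ℕ) :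
    MeasurableSet (metA T F N) :=
  measurableSet_lt measurable_const (hF.add ((metQ_measurable hT hF N).comp hT))

/-- Maximal ergodic theorem (Garsia's proof). -/
theorem maximal_ergodic (hT : MeasurePreserving T μ μ) (hF : Measurable F)
    (hFi : Integrable F μ) :
    0 ≤ ∫ x in (⋃ N, metA T F N), F x ∂μ := by
  have hTm : Measurable T := hT.measurable
  have hAmeas : ∀ N, MeasurableSet (metA T F N) := metA_measurable hTm hF
  have hQi : ∀ N, Integrable (metQ T F N) μ := metQ_integrable hT hF hFi
  have hQTi : ∀ N, Integrable (fun x => metQ T F N (T x)) μ := fun N =>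
    (hT.integrable_comp (hQi N).aestronglyMeasurable).mpr (hQi N)
  have key : ∀ N, 0 ≤ ∫ x in metA T F N, F x ∂μ := by
    intro N
    have e1 : ∫ x in metA T F N, F x ∂μ
        = ∫ x in metA T F N, (metQ T F (N+1) x - metQ T F N (T x)) ∂μ := by
      refine setIntegral_congr_fun (hAmeas N) (fun x hx => ?_)
      have hx' : 0 < F x + metQ T F N (T x) := hx
      show F x = metQ T F (N+1) x - metQ T F N (T x)
      have : metQ T F (N+1) x = F x + metQ T F N (T x) := max_eq_right hx'.le
      linarith
    have e2 : ∫ x in metA T F N, (metQ T F (N+1) x - metQ T F N (T x)) ∂μ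
        = ∫ x in metA T F N, metQ T F (N+1) x ∂μ - ∫ x in metA T F N, metQ T F N (T x) ∂μ :=
      integral_sub ((hQi (N+1)).restrict) ((hQTi N).restrict)
    have e3 : ∫ x in metA T F N, metQ T F (N+1) x ∂μ = ∫ x, metQ T F (N+1) x ∂μ := by
      have hcompl : ∫ x in (metA T F N)ᶜ, metQ T F (N+1) x ∂μ = 0 := by
        have : EqOn (fun x => metQ T F (N+1) x) (fun _ => (0:ℝ)) (metA T F N)ᶜ := by
          intro x hx
          have hx' : ¬ (0 < F x + metQ T F N (T x)) := hx
          show max 0 (F x + metQ T F N (T x)) = 0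
          exact max_eq_left (not_lt.mp hx')
        rw [setIntegral_congr_fun (hAmeas N).compl this]
        simp
      have := integral_add_compl (hAmeas N) (hQi (N+1))
      rw [hcompl] at this
      linarith
    have e4 : ∫ x in metA T F N, metQ T F N (T x) ∂μ ≤ ∫ x, metQ T F N (T x) ∂μ :=
      setIntegral_le_integral (hQTi N) (Filter.Eventually.of_forall fun x => metQ_nonneg N (T x))
    have e5 : ∫ x, metQ T F N (T x) ∂μ = ∫ x, metQ T F N x ∂μ :=
      integral_comp_mp hT (hQi N).aestronglyMeasurable
    have e6 : ∫ x, metQ T F N x ∂μ ≤ ∫ x, metQ T F (N+1) x ∂μ :=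
      integral_mono (hQi N) (hQi (N+1)) (fun x => metQ_mono N x)
    rw [e1, e2]
    linarith
  have hlim : Tendsto (fun N => ∫ x in metA T F N, F x ∂μ) atTop
      (nhds (∫ x in ⋃ N, metA T F N, F x ∂μ)) :=
    tendsto_setIntegral_of_monotone hAmeas metA_mono hFi.integrableOn
  exact ge_of_tendsto' hlim key


lemma birkhoffSum_const_add (T : α → α) (F : α → ℝ) (ε : ℝ) (n : ℕ) (x : α) :
    birkhoffSum T (fun y => F y + ε) n x = birkhoffSum T F n x + n * ε := by
  simp [birkhoffSum, Finset.sum_add_distrib]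

/-- Sub-coboundary lemma: if `G ∘ T - G ≤ F` a.e. for a real-valued measurable `G`,
then `∫ F ≥ 0`.  Proved via Poincaré recurrence and the maximal ergodic theorem. -/
theorem subcoboundary (hT : MeasurePreserving T μ μ) (hF : Measurable F) (hFi : Integrable F μ)
    {G : α → ℝ} (hG : Measurable G) (hGT : ∀ᵐ x ∂μ, G (T x) - G x ≤ F x) :
    0 ≤ ∫ x, F x ∂μ := by
  classical
  have hTm : Measurable T := hT.measurable
  set D0 : Set α := {x | G (T x) - G x ≤ F x} with hD0
  have hD0m : MeasurableSet D0 := measurableSet_le ((hG.comp hTm).sub hG) hF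
  have hD0c : μ D0ᶜ = 0 := by
    simpa [hD0, compl_setOf] using ae_iff.mp hGT
  set D : Set α := ⋂ k, (T^[k]) ⁻¹' D0 with hD
  have hDm : MeasurableSet D := MeasurableSet.iInter fun k => (hTm.iterate k) hD0m
  have hDc : μ Dᶜ = 0 := by
    rw [hD, compl_iInter]
    refine measure_iUnion_null fun k => ?_
    rw [← preimage_compl]
    rw [(hT.iterate k).measure_preimage hD0m.compl.nullMeasurableSet]
    exact hD0c
  have htel : ∀ x ∈ D, ∀ n : ℕ, G (T^[n] x) - G x ≤ birkhoffSum T F n x := by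
    intro x hx n
    induction n with
    | zero => simp
    | succ n ih =>
        have h1 : birkhoffSum T F (n+1) x = birkhoffSum T F n x + F (T^[n] x) :=
          birkhoffSum_succ T F n x
        have h2 : G (T (T^[n] x)) - G (T^[n] x) ≤ F (T^[n] x) := mem_iInter.mp hx n
        rw [Function.iterate_succ_apply']
        linarith
  suffices h : ∀ ε : ℝ, 0 < ε → -ε ≤ ∫ x, F x ∂μ by
    by_contra hc
    push_neg at hc
    have := h (-(∫ x, F x ∂μ)/2) (by linarith)
    linarith
  intro ε hε
  set F' : α → ℝ := fun x => F x + ε with hF'def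
  have hF'm : Measurable F' := hF.add measurable_const
  have hF'i : Integrable F' μ := hFi.add (integrable_const ε)
  set AU : Set α := ⋃ N, metA T F' N with hAUdef
  have hAUm : MeasurableSet AU := MeasurableSet.iUnion fun N => metA_measurable hTm hF'm N
  have hAUc : μ AUᶜ = 0 := by
    have hBR : ∀ R : ℕ, μ (AUᶜ ∩ D ∩ {x | |G x| ≤ (R:ℝ)}) = 0 := by
      intro R
      set B : Set α := AUᶜ ∩ D ∩ {x | |G x| ≤ (R:ℝ)} with hBdef
      have hBm : MeasurableSet B :=
        (hAUm.compl.inter hDm).inter (measurableSet_le hG.norm measurable_const)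
      have hrec := (hT.conservative).ae_mem_imp_frequently_image_mem hBm.nullMeasurableSet
      have hae : ∀ᵐ x ∂μ, x ∉ B := by
        filter_upwards [hrec] with x hx hxB
        obtain ⟨⟨hxAU, hxD⟩, hxG⟩ := id hxB
        -- pick a large return time
        obtain ⟨n, hn_ge, hTnB⟩ := (frequently_atTop.mp (hx hxB))
          (max 1 (⌈(2 * (R:ℝ) / ε)⌉₊ + 1))
        have hn1 : 1 ≤ n := le_trans (le_max_left _ _) hn_ge
        have hnbig : 2 * (R:ℝ) / ε < n := by
          have h1 : (⌈(2 * (R:ℝ) / ε)⌉₊ + 1 : ℕ) ≤ n := le_trans (le_max_right _ _) hn_ge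
          have h2 : (2 * (R:ℝ) / ε) ≤ (⌈(2 * (R:ℝ) / ε)⌉₊ : ℝ) := Nat.le_ceil _
          have h3 : ((⌈(2 * (R:ℝ) / ε)⌉₊ + 1 : ℕ) : ℝ) ≤ (n : ℝ) := by exact_mod_cast h1
          push_cast at h3
          linarith
      -- x ∈ AUᶜ : all Birkhoff sums of F' are ≤ 0
        have hS : birkhoffSum T F' n x ≤ 0 := by
          by_contra hpos
          push_neg at hpos
          exact hxAU (mem_metA_union hn1 hpos)
        have h1 : G (T^[n] x) - G x ≤ birkhoffSum T F n x := htel x hxD n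
        have h2 : birkhoffSum T F' n x = birkhoffSum T F n x + n * ε := by
          rw [hF'def, birkhoffSum_const_add]
        have h3 : |G (T^[n] x)| ≤ (R:ℝ) := hTnB.2
        have h4 : |G x| ≤ (R:ℝ) := hxG
        have h5 : (2 * (R:ℝ)) < n * ε := by
          rw [div_lt_iff₀ hε] at hnbig
          linarith
        have h6 : -(R:ℝ) ≤ G (T^[n] x) := neg_le_of_abs_le h3
        have h7 : G x ≤ (R:ℝ) := le_of_abs_le h4
        linarith
      have : μ {x | ¬ x ∉ B} = 0 := by
        rw [← ae_iff]
        exact hae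
      simpa using this
    have hsub : AUᶜ ∩ D ⊆ ⋃ R : ℕ, (AUᶜ ∩ D ∩ {x | |G x| ≤ (R:ℝ)}) := by
      intro x hx
      obtain ⟨R, hR⟩ := exists_nat_ge (|G x|)
      exact mem_iUnion.mpr ⟨R, hx, hR⟩
    have h1 : μ (AUᶜ ∩ D) = 0 :=
      measure_mono_null hsub (measure_iUnion_null hBR)
    have h2 : μ AUᶜ ≤ μ (AUᶜ ∩ D) + μ Dᶜ := by
      refine le_trans (measure_mono ?_) (measure_union_le _ _)
      intro x hx
      by_cases hxD : x ∈ D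
      · exact Or.inl ⟨hx, hxD⟩
      · exact Or.inr hxD
    simp [h1, hDc] at h2
    exact h2
  have hmet := maximal_ergodic (F := F') hT hF'm hF'i
  have hres : μ.restrict AU = μ := by
    refine Measure.restrict_eq_self_of_ae_mem ?_
    rw [← compl_compl AU] at hAUc ⊢
    exact ae_iff.mpr (by simp only [compl_compl] at hAUc ⊢; exact hAUc)
  rw [hAUdef] at hres
  rw [show (∫ x in ⋃ N, metA T F' N, F' x ∂μ) = ∫ x, F' x ∂μ by rw [hres]] at hmet
  have : ∫ x, F' x ∂μ = (∫ x, F x ∂μ) + ε := by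
    rw [hF'def, integral_add hFi (integrable_const ε), integral_const]
    simp
  linarith

/-- Mirror version: if `F ≤ G ∘ T - G` a.e. then `∫ F ≤ 0`. -/
theorem supercoboundary (hT : MeasurePreserving T μ μ) (hF : Measurable F) (hFi : Integrable F μ)
    {G : α → ℝ} (hG : Measurable G) (hGT : ∀ᵐ x ∂μ, F x ≤ G (T x) - G x) :
    ∫ x, F x ∂μ ≤ 0 := by
  have h := subcoboundary (F := fun x => -F x) hT hF.neg hFi.neg (G := fun x => -G x) hG.neg ?_
  · rw [integral_neg] at h
    linarith
  · filter_upwards [hGT] with x hx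
    linarith

end MET

end DGRAux


namespace DGR

set_option linter.unusedSectionVars false

/-- The two-sided sequence space `Σ₂ = {0,1}^ℤ`. -/
abbrev Seq2 := ℤ → Fin 2

/-- The left shift map `σ`. -/
def shift (ξ : Seq2) : Seq2 := fun n => ξ (n + 1)

/-- The constant sequence `0^ℤ`. -/
def zeroSeq : Seq2 := fun _ => 0

/-- The skew-product `F̃(ξ,x) = (σ ξ, f̃_{ξ₀} x)`. -/
def F (f0 f1 : ℝ → ℝ) (p : Seq2 × ℝ) : Seq2 × ℝ :=
  (shift p.1, if p.1 0 = 0 then f0 p.2 else f1 p.2)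

/-- The fixed point `P = (0^ℤ, 1)`. -/
def Pfix : Seq2 × ℝ := (zeroSeq, 1)

/-- The fixed point `Q = (0^ℤ, 0)`. -/
def Qfix : Seq2 × ℝ := (zeroSeq, 0)

/-- `f_ξ^n = f_{ξ_{n-1}} ∘ ⋯ ∘ f_{ξ₀}`. -/
def fIter (f0 f1 : ℝ → ℝ) (ξ : Seq2) : ℕ → ℝ → ℝ
  | 0, x => x
  | n + 1, x => (if ξ (n : ℤ) = 0 then f0 else f1) (fIter f0 f1 ξ n x)

/-- The derivative `(f_ξ^n)'(x)` (chain rule product). -/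
def fIterDeriv (f0 f1 df0 df1 : ℝ → ℝ) (ξ : Seq2) : ℕ → ℝ → ℝ
  | 0, _ => 1
  | n + 1, x => fIterDeriv f0 f1 df0 df1 ξ n x *
      (if ξ (n : ℤ) = 0 then df0 else df1) (fIter f0 f1 ξ n x)

/-- `ξ⁺` is admissible for `x`: all forward iterates are defined and stay in `[0,1]`. -/
def forwardAdmissible (f0 f1 : ℝ → ℝ) (d : ℝ) (ξ : Seq2) (x : ℝ) : Prop :=
  ∀ n : ℕ, fIter f0 f1 ξ n x ∈ Icc (0 : ℝ) 1 ∧ (ξ (n : ℤ) = 1 → d ≤ fIter f0 f1 ξ n x)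

/-- `ξ⁻` is admissible for `x`: there is a backward orbit through `x` staying in `[0,1]`. -/
def backwardAdmissible (f0 f1 : ℝ → ℝ) (d : ℝ) (ξ : Seq2) (x : ℝ) : Prop :=
  ∃ y : ℕ → ℝ, y 0 = x ∧ ∀ m : ℕ,
    y m ∈ Icc (0 : ℝ) 1 ∧
    (ξ (-(m : ℤ) - 1) = 0 → f0 (y (m + 1)) = y m) ∧
    (ξ (-(m : ℤ) - 1) = 1 → d ≤ y (m + 1) ∧ f1 (y (m + 1)) = y m)

/-- The maximal invariant set `Γ` of `F̃` in `Σ₂ × [0,1]`. -/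
def Gamma (f0 f1 : ℝ → ℝ) (d : ℝ) : Set (Seq2 × ℝ) :=
  { p | forwardAdmissible f0 f1 d p.1 p.2 ∧ backwardAdmissible f0 f1 d p.1 p.2 }

/-- The subshift `Σ = π(Γ)` of admissible sequences. -/
def SigmaA (f0 f1 : ℝ → ℝ) (d : ℝ) : Set Seq2 := Prod.fst '' Gamma f0 f1 d

/-- `I_{ξ⁺}`. -/
def Iplus (f0 f1 : ℝ → ℝ) (d : ℝ) (ξ : Seq2) : Set ℝ := { x | forwardAdmissible f0 f1 d ξ x }

/-- `I_{ξ⁻}`. -/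
def Iminus (f0 f1 : ℝ → ℝ) (d : ℝ) (ξ : Seq2) : Set ℝ := { x | backwardAdmissible f0 f1 d ξ x }

/-- `I_ξ = I_{ξ⁺} ∩ I_{ξ⁻}`, the spine over `ξ`. -/
def Ifiber (f0 f1 : ℝ → ℝ) (d : ℝ) (ξ : Seq2) : Set ℝ := Iplus f0 f1 d ξ ∩ Iminus f0 f1 d ξ

/-- `x_{ξ⁺}`, the left endpoint of `I_{ξ⁺} = [x_{ξ⁺}, 1]`. -/
noncomputable def xPlus (f0 f1 : ℝ → ℝ) (d : ℝ) (ξ : Seq2) : ℝ := sInf (Iplus f0 f1 d ξ)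

/-- `x_{ξ⁻}`, the right endpoint of `I_{ξ⁻} = [0, x_{ξ⁻}]`. -/
noncomputable def xMinus (f0 f1 : ℝ → ℝ) (d : ℝ) (ξ : Seq2) : ℝ := sSup (Iminus f0 f1 d ξ)

/-- Hypothesis (H1), stated for strictly increasing differentiable extensions
`f0, f1 : ℝ → ℝ` with derivative functions `df0, df1`, whose restrictions to
`[0,1]` resp. `[d,1]` are the fiber maps. -/
structure H1 (f0 f1 df0 df1 : ℝ → ℝ) (d : ℝ) : Prop where
  d_mem : d ∈ Ioo (0 : ℝ) 1
  mono0 : StrictMono f0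
  mono1 : StrictMono f1
  hasDeriv0 : ∀ x, HasDerivAt f0 (df0 x) x
  hasDeriv1 : ∀ x, HasDerivAt f1 (df1 x) x
  contDeriv0 : ContinuousOn df0 (Icc 0 1)
  contDeriv1 : ContinuousOn df1 (Icc d 1)
  maps0 : MapsTo f0 (Icc 0 1) (Icc 0 1)
  surj0 : SurjOn f0 (Icc 0 1) (Icc 0 1)
  maps1 : MapsTo f1 (Icc d 1) (Icc 0 1)
  deriv0_zero : 1 < df0 0
  deriv0_one : df0 1 ∈ Ioo (0 : ℝ) 1
  f0_above : ∀ x ∈ Ioo (0 : ℝ) 1, x < f0 x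
  f1_d : f1 d = 0
  f1_below : ∀ x ∈ Icc d 1, f1 x < x
  deriv1_one : 0 < df1 1

/-- Hypothesis (H2): `f₀'` strictly decreasing, `f₁'` nonincreasing. -/
def H2 (df0 df1 : ℝ → ℝ) (d : ℝ) : Prop :=
  StrictAntiOn df0 (Icc 0 1) ∧ AntitoneOn df1 (Icc d 1)

/-- Hypothesis (H2+) with constant `M`. -/
def H2plus (df0 df1 : ℝ → ℝ) (d M : ℝ) : Prop :=
  1 < M ∧
  (∀ x ∈ Icc (0 : ℝ) 1, ∀ y ∈ Icc (0 : ℝ) 1, x < y →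
    M⁻¹ * (y - x) ≤ Real.log (df0 x) - Real.log (df0 y) ∧
      Real.log (df0 x) - Real.log (df0 y) ≤ M * (y - x)) ∧
  (∀ x ∈ Icc d 1, ∀ y ∈ Icc d 1, x < y →
    M⁻¹ * (y - x) ≤ Real.log (df1 x) - Real.log (df1 y) ∧
      Real.log (df1 x) - Real.log (df1 y) ≤ M * (y - x))

/-- The fiber Lyapunov exponent `χ(μ) = ∫ log f'_{ξ₀}(x) dμ(ξ,x)`. -/
noncomputable def lyap (df0 df1 : ℝ → ℝ) (μ : Measure (Seq2 × ℝ)) : ℝ :=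
  ∫ p, Real.log ((if p.1 0 = 0 then df0 else df1) p.2) ∂μ

/-- An `F`-invariant Borel probability measure on `Γ`. -/
def IsInvGamma (f0 f1 : ℝ → ℝ) (d : ℝ) (μ : Measure (Seq2 × ℝ)) : Prop :=
  IsProbabilityMeasure μ ∧ μ (Gamma f0 f1 d) = 1 ∧ μ.map (F f0 f1) = μ

/-- An ergodic `F`-invariant Borel probability measure on `Γ`. -/
def IsErgGamma (f0 f1 : ℝ → ℝ) (d : ℝ) (μ : Measure (Seq2 × ℝ)) : Prop :=
  IsInvGamma f0 f1 d μ ∧ Ergodic (F f0 f1) μ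

/-- A `σ`-invariant Borel probability measure on `Σ`. -/
def IsInvSigma (f0 f1 : ℝ → ℝ) (d : ℝ) (ν : Measure Seq2) : Prop :=
  IsProbabilityMeasure ν ∧ ν (SigmaA f0 f1 d) = 1 ∧ ν.map shift = ν

/-- An ergodic `σ`-invariant Borel probability measure on `Σ`. -/
def IsErgSigma (f0 f1 : ℝ → ℝ) (d : ℝ) (ν : Measure Seq2) : Prop :=
  IsInvSigma f0 f1 d ν ∧ Ergodic shift ν

/-- `f_{[w]} = f_{w_{n-1}} ∘ ⋯ ∘ f_{w_0}` for a finite word `w`. -/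
def fWord (f0 f1 : ℝ → ℝ) : List (Fin 2) → ℝ → ℝ
  | [], x => x
  | i :: w, x => fWord f0 f1 w ((if i = 0 then f0 else f1) x)

/-- The derivative `(f_{[w]})'(x)`. -/
def fWordDeriv (f0 f1 df0 df1 : ℝ → ℝ) : List (Fin 2) → ℝ → ℝ
  | [], _ => 1
  | i :: w, x => (if i = 0 then df0 x else df1 x) *
      fWordDeriv f0 f1 df0 df1 w ((if i = 0 then f0 else f1) x)

/-- The word `w` is (forward) admissible at `x`. -/
def wordAdm (f0 f1 : ℝ → ℝ) (d : ℝ) : List (Fin 2) → ℝ → Prop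
  | [], x => x ∈ Icc (0 : ℝ) 1
  | i :: w, x => x ∈ Icc (0 : ℝ) 1 ∧ (i = 1 → d ≤ x) ∧
      wordAdm f0 f1 d w ((if i = 0 then f0 else f1) x)

/-- The admissibility interval `I_{[w]}`. -/
def IWord (f0 f1 : ℝ → ℝ) (d : ℝ) (w : List (Fin 2)) : Set ℝ := { x | wordAdm f0 f1 d w x }

/-- The point `a_{[w]}`, left endpoint of `I_{[w]} = [a_{[w]}, 1]`. -/
noncomputable def aWord (f0 f1 : ℝ → ℝ) (d : ℝ) (w : List (Fin 2)) : ℝ := sInf (IWord f0 f1 d w)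

/-- The periodic sequence `w^ℤ`. -/
def perSeq (w : List (Fin 2)) : Seq2 := fun n => w.getD (n % (w.length : ℤ)).toNat 0

/-- The finite word `(ξ_a, ξ_{a+1}, …, ξ_{a+n-1})` read off a sequence. -/
def seqWord (ξ : Seq2) (a : ℤ) (n : ℕ) : List (Fin 2) := List.ofFn fun i : Fin n => ξ (a + (i.1 : ℤ))

/-- `X` is a periodic point of `F` in `Γ` with period `n ≥ 1`. -/
def IsPerPt (f0 f1 : ℝ → ℝ) (d : ℝ) (X : Seq2 × ℝ) (n : ℕ) : Prop :=
  X ∈ Gamma f0 f1 d ∧ 1 ≤ n ∧ (F f0 f1)^[n] X = X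

/-- Hyperbolic periodic point (the multiplier is different from 1). -/
def IsHypPerPt (f0 f1 df0 df1 : ℝ → ℝ) (d : ℝ) (X : Seq2 × ℝ) : Prop :=
  ∃ n, IsPerPt f0 f1 d X n ∧ fIterDeriv f0 f1 df0 df1 X.1 n X.2 ≠ 1

/-- Hyperbolic periodic point of expanding type. -/
def IsExpPerPt (f0 f1 df0 df1 : ℝ → ℝ) (d : ℝ) (X : Seq2 × ℝ) : Prop :=
  ∃ n, IsPerPt f0 f1 d X n ∧ 1 < fIterDeriv f0 f1 df0 df1 X.1 n X.2

/-- Hyperbolic periodic point of contracting type. -/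
def IsConPerPt (f0 f1 df0 df1 : ℝ → ℝ) (d : ℝ) (X : Seq2 × ℝ) : Prop :=
  ∃ n, IsPerPt f0 f1 d X n ∧ 0 < fIterDeriv f0 f1 df0 df1 X.1 n X.2 ∧
    fIterDeriv f0 f1 df0 df1 X.1 n X.2 < 1

/-- Parabolic periodic point (multiplier 1). -/
def IsParPerPt (f0 f1 df0 df1 : ℝ → ℝ) (d : ℝ) (X : Seq2 × ℝ) : Prop :=
  ∃ n, IsPerPt f0 f1 d X n ∧ fIterDeriv f0 f1 df0 df1 X.1 n X.2 = 1

/-- The stable set `W^s(R, F)` of a point, for `F : Γ → Γ`. -/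
def Ws (f0 f1 : ℝ → ℝ) (d : ℝ) (R : Seq2 × ℝ) : Set (Seq2 × ℝ) :=
  { X | (∀ k : ℕ, (F f0 f1)^[k] X ∈ Gamma f0 f1 d) ∧
      Tendsto (fun k => (F f0 f1)^[k] X) atTop (nhds R) }

/-- The unstable set `W^u(R, F) = W^s(R, F⁻¹)` of a point, for `F : Γ → Γ`. -/
def Wu (f0 f1 : ℝ → ℝ) (d : ℝ) (R : Seq2 × ℝ) : Set (Seq2 × ℝ) :=
  { X | ∃ Z : ℕ → Seq2 × ℝ, Z 0 = X ∧
      (∀ m : ℕ, Z m ∈ Gamma f0 f1 d ∧ F f0 f1 (Z (m + 1)) = Z m) ∧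
      Tendsto Z atTop (nhds R) }

/-- The stable set of the orbit of `R`. -/
def WsOrbit (f0 f1 : ℝ → ℝ) (d : ℝ) (R : Seq2 × ℝ) : Set (Seq2 × ℝ) :=
  ⋃ j : ℕ, Ws f0 f1 d ((F f0 f1)^[j] R)

/-- The unstable set of the orbit of `R`. -/
def WuOrbit (f0 f1 : ℝ → ℝ) (d : ℝ) (R : Seq2 × ℝ) : Set (Seq2 × ℝ) :=
  ⋃ j : ℕ, Wu f0 f1 d ((F f0 f1)^[j] R)

/-- The homoclinic class `H(R,F)`. -/
def homClass (f0 f1 : ℝ → ℝ) (d : ℝ) (R : Seq2 × ℝ) : Set (Seq2 × ℝ) :=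
  closure (WsOrbit f0 f1 d R ∩ WuOrbit f0 f1 d R)

/-- `R₁` and `R₂` are homoclinically related. -/
def HomRel (f0 f1 : ℝ → ℝ) (d : ℝ) (R₁ R₂ : Seq2 × ℝ) : Prop :=
  (WsOrbit f0 f1 d R₁ ∩ WuOrbit f0 f1 d R₂).Nonempty ∧
  (WuOrbit f0 f1 d R₁ ∩ WsOrbit f0 f1 d R₂).Nonempty

/-- A set is (fiber) hyperbolic of expanding type. -/
def IsHypExpanding (f0 f1 df0 df1 : ℝ → ℝ) (Λ : Set (Seq2 × ℝ)) : Prop :=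
  ∃ C : ℝ, 0 < C ∧ ∃ α : ℝ, 0 < α ∧ ∀ p ∈ Λ, ∀ n : ℕ, 1 ≤ n →
    C * Real.exp (α * n) ≤ fIterDeriv f0 f1 df0 df1 p.1 n p.2

/-- A set is (fiber) hyperbolic of contracting type (backward iterates expand). -/
def IsHypContracting (f0 f1 df0 df1 : ℝ → ℝ) (d : ℝ) (Λ : Set (Seq2 × ℝ)) : Prop :=
  ∃ C : ℝ, 0 < C ∧ ∃ α : ℝ, 0 < α ∧ ∀ p ∈ Λ, ∀ Z : ℕ → Seq2 × ℝ, Z 0 = p →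
    (∀ m : ℕ, Z m ∈ Gamma f0 f1 d ∧ F f0 f1 (Z (m + 1)) = Z m) →
    ∀ n : ℕ, 1 ≤ n → fIterDeriv f0 f1 df0 df1 (Z n).1 n (Z n).2 ≤ C * Real.exp (-(α * n))

/-- The nonwandering set `Ω(Γ, F)` of `F : Γ → Γ`. -/
def nonwandering (f0 f1 : ℝ → ℝ) (d : ℝ) : Set (Seq2 × ℝ) :=
  { X | X ∈ Gamma f0 f1 d ∧ ∀ U : Set (Seq2 × ℝ), IsOpen U → X ∈ U →
      ∃ n : ℕ, 1 ≤ n ∧ ∃ Y ∈ U ∩ Gamma f0 f1 d, (F f0 f1)^[n] Y ∈ U ∩ Gamma f0 f1 d }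

/-- The finite word `w` occurs in the sequence `ξ`. -/
def OccursIn (w : List (Fin 2)) (ξ : Seq2) : Prop :=
  ∃ k : ℤ, ∀ i : ℕ, i < w.length → ξ (k + (i : ℤ)) = w.getD i 0

/-- The set `Σ^het` of heteroclinic admissible sequences. -/
def SigmaHet (f0 f1 : ℝ → ℝ) (d : ℝ) : Set Seq2 :=
  { ξ | ξ ∈ SigmaA f0 f1 d ∧ ∃ k : ℤ, ∃ w : List (Fin 2),
      (∀ m : ℤ, m < k → ξ m = 0) ∧
      (∀ i : ℕ, i < w.length → ξ (k + (i : ℤ)) = w.getD i 0) ∧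
      (∀ m : ℤ, k + (w.length : ℤ) ≤ m → ξ m = 0) ∧
      fWord f0 f1 w 1 = 0 }

/-- `Σ^cod = Σ ∖ Σ^het`. -/
def SigmaCod (f0 f1 : ℝ → ℝ) (d : ℝ) : Set Seq2 := SigmaA f0 f1 d \ SigmaHet f0 f1 d

/-- `Γ^cod = π⁻¹(Σ^cod) ∩ Γ`. -/
def GammaCod (f0 f1 : ℝ → ℝ) (d : ℝ) : Set (Seq2 × ℝ) :=
  { p ∈ Gamma f0 f1 d | p.1 ∈ SigmaCod f0 f1 d }

/-- `Σ^sing`: sequences whose spine is a singleton. -/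
def SigmaSing (f0 f1 : ℝ → ℝ) (d : ℝ) : Set Seq2 :=
  { ξ | ξ ∈ SigmaA f0 f1 d ∧ (Ifiber f0 f1 d ξ).Subsingleton }

/-- `Σ^spine`: sequences whose spine is a nondegenerate interval. -/
def SigmaSpine (f0 f1 : ℝ → ℝ) (d : ℝ) : Set Seq2 :=
  { ξ | ξ ∈ SigmaA f0 f1 d ∧ ¬ (Ifiber f0 f1 d ξ).Subsingleton }

/-- `T` restricted to `S` is topologically transitive. -/
def TransOn {α : Type*} [TopologicalSpace α] (T : α → α) (S : Set α) : Prop :=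
  ∀ U V : Set α, IsOpen U → IsOpen V → (U ∩ S).Nonempty → (V ∩ S).Nonempty →
    ∃ n : ℕ, 1 ≤ n ∧ (T^[n] '' (U ∩ S) ∩ (V ∩ S)).Nonempty

/-- `T` restricted to `S` is topologically mixing. -/
def MixOn {α : Type*} [TopologicalSpace α] (T : α → α) (S : Set α) : Prop :=
  ∀ U V : Set α, IsOpen U → IsOpen V → (U ∩ S).Nonempty → (V ∩ S).Nonempty →
    ∃ N : ℕ, ∀ n : ℕ, N ≤ n → (T^[n] '' (U ∩ S) ∩ (V ∩ S)).Nonempty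

/-- A subshift of finite type: the sequences avoiding a finite list of forbidden words. -/
def IsSFT (S : Set Seq2) : Prop :=
  ∃ Fw : Finset (List (Fin 2)), S = { ξ | ∀ w ∈ Fw, ¬ OccursIn w ξ }

/-- Number of words of length `n` appearing in sequences of `S`. -/
noncomputable def wordCount (S : Set Seq2) (n : ℕ) : ℕ :=
  Nat.card { w : List (Fin 2) // w.length = n ∧ ∃ ξ ∈ S, OccursIn w ξ }

/-- Topological entropy of the shift on a subshift `S`, as exponential growth rate of
the number of words. -/
noncomputable def subshiftEntropy (S : Set Seq2) : ℝ :=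
  Filter.limsup (fun n : ℕ => Real.log (wordCount S n) / n) Filter.atTop

/-- `Λ` is `F`-invariant. -/
def IsInvariantSet (f0 f1 : ℝ → ℝ) (Λ : Set (Seq2 × ℝ)) : Prop := F f0 f1 '' Λ = Λ

/-- `Λ` is locally maximal: it is the set of full orbits inside some neighborhood. -/
def IsLocallyMaximal (f0 f1 : ℝ → ℝ) (Λ : Set (Seq2 × ℝ)) : Prop :=
  ∃ V : Set (Seq2 × ℝ), IsOpen V ∧ Λ ⊆ V ∧
    Λ = { X | ∃ Z : ℤ → Seq2 × ℝ, Z 0 = X ∧ (∀ n : ℤ, Z (n + 1) = F f0 f1 (Z n)) ∧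
      ∀ n : ℤ, Z n ∈ V }

/-- Basic set with uniform fiber expansion. -/
def IsBasicExp (f0 f1 df0 df1 : ℝ → ℝ) (d : ℝ) (Λ : Set (Seq2 × ℝ)) : Prop :=
  Λ ⊆ Gamma f0 f1 d ∧ IsCompact Λ ∧ IsInvariantSet f0 f1 Λ ∧ IsLocallyMaximal f0 f1 Λ ∧
  TransOn (F f0 f1) Λ ∧ IsHypExpanding f0 f1 df0 df1 Λ

/-- Basic set with uniform fiber contraction. -/
def IsBasicCon (f0 f1 df0 df1 : ℝ → ℝ) (d : ℝ) (Λ : Set (Seq2 × ℝ)) : Prop :=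
  Λ ⊆ Gamma f0 f1 d ∧ IsCompact Λ ∧ IsInvariantSet f0 f1 Λ ∧ IsLocallyMaximal f0 f1 Λ ∧
  TransOn (F f0 f1) Λ ∧ IsHypContracting f0 f1 df0 df1 d Λ

/-- The entropy function `𝓗(p) = -p log p - (1-p) log (1-p)`. -/
noncomputable def entH (p : ℝ) : ℝ := -(p * Real.log p) - (1 - p) * Real.log (1 - p)

/-! ## shifts -/

def shiftZ (k : ℤ) (ξ : Seq2) : Seq2 := fun m => ξ (m + k)

lemma shiftZ_zero (ξ : Seq2) : shiftZ 0 ξ = ξ := by funext m; simp [shiftZ]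

lemma shiftZ_shiftZ (j k : ℤ) (ξ : Seq2) : shiftZ j (shiftZ k ξ) = shiftZ (j + k) ξ := by
  funext m; simp [shiftZ, add_assoc]

lemma shift_eq_shiftZ (ξ : Seq2) : shift ξ = shiftZ 1 ξ := rfl

lemma shift_shiftZ (k : ℤ) (ξ : Seq2) : shift (shiftZ k ξ) = shiftZ (k + 1) ξ := by
  funext m; simp [shift, shiftZ]; ring_nf

lemma shiftZ_shift (k : ℤ) (ξ : Seq2) : shiftZ k (shift ξ) = shiftZ (k + 1) ξ := by
  funext m; simp [shift, shiftZ]; ring_nf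

lemma measurable_shift : Measurable shift :=
  measurable_pi_lambda _ (fun n => measurable_pi_apply (n + 1))

lemma measurable_shiftZ (k : ℤ) : Measurable (shiftZ k) :=
  measurable_pi_lambda _ (fun n => measurable_pi_apply (n + k))

lemma fin2_cases (i : Fin 2) : i = 0 ∨ i = 1 := by omega

/-! ## basic consequences of H1 -/

section H1facts
variable {f0 f1 df0 df1 : ℝ → ℝ} {d : ℝ} (h1 : H1 f0 f1 df0 df1 d)

include h1

lemma cont0 : Continuous f0 :=
  continuous_iff_continuousAt.mpr fun x => (h1.hasDeriv0 x).continuousAt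

lemma cont1 : Continuous f1 :=
  continuous_iff_continuousAt.mpr fun x => (h1.hasDeriv1 x).continuousAt

lemma f0_zero : f0 0 = 0 := by
  obtain ⟨y, hy, hfy⟩ := h1.surj0 (show (0:ℝ) ∈ Icc (0:ℝ) 1 by simp)
  have h2 : f0 0 ≤ f0 y := h1.mono0.monotone hy.1
  have h3 : (0:ℝ) ≤ f0 0 := (h1.maps0 (show (0:ℝ) ∈ Icc (0:ℝ) 1 by simp)).1
  rw [hfy] at h2
  linarith

lemma f0_one : f0 1 = 1 := by
  obtain ⟨y, hy, hfy⟩ := h1.surj0 (show (1:ℝ) ∈ Icc (0:ℝ) 1 by simp)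
  have h2 : f0 y ≤ f0 1 := h1.mono0.monotone hy.2
  have h3 : f0 1 ≤ 1 := (h1.maps0 (show (1:ℝ) ∈ Icc (0:ℝ) 1 by simp)).2
  rw [hfy] at h2
  linarith

lemma f1_one_lt : f1 1 < 1 := h1.f1_below 1 ⟨h1.d_mem.2.le, le_refl 1⟩

lemma f1_one_mem : f1 1 ∈ Icc (0:ℝ) 1 := h1.maps1 ⟨h1.d_mem.2.le, le_refl 1⟩

end H1facts

/-! ## finite-horizon admissibility -/

section Adm
variable (f0 f1 : ℝ → ℝ) (d : ℝ)

def admN : ℕ → Seq2 → ℝ → Prop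
  | 0, _, x => x ∈ Icc (0:ℝ) 1
  | n+1, ξ, x => x ∈ Icc (0:ℝ) 1 ∧ (ξ 0 = 1 → d ≤ x) ∧
      admN n (shift ξ) ((if ξ 0 = 0 then f0 else f1) x)

def setI (n : ℕ) (ξ : Seq2) : Set ℝ := {x | admN f0 f1 d n ξ x}

noncomputable def aN (n : ℕ) (ξ : Seq2) : ℝ := sInf (setI f0 f1 d n ξ)

/-- sequences all whose finite-horizon admissibility sets are nonempty. -/
def SetS : Set Seq2 := {ξ | ∀ n, (setI f0 f1 d n ξ).Nonempty}

/-- the invariant core: all shifts lie in `SetS`. -/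
def SetG : Set Seq2 := {ξ | ∀ k : ℤ, shiftZ k ξ ∈ SetS f0 f1 d}

end Adm

section AdmFacts
variable {f0 f1 df0 df1 : ℝ → ℝ} {d : ℝ}

lemma admN_mem_Icc {n : ℕ} {ξ : Seq2} {x : ℝ} (h : admN f0 f1 d n ξ x) : x ∈ Icc (0:ℝ) 1 := by
  cases n with
  | zero => exact h
  | succ n => exact h.1

lemma admN_of_succ {n : ℕ} {ξ : Seq2} {x : ℝ} (h : admN f0 f1 d (n+1) ξ x) :
    admN f0 f1 d n ξ x := by
  induction n generalizing ξ x with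
  | zero => exact h.1
  | succ n ih => exact ⟨h.1, h.2.1, ih h.2.2⟩

lemma setI_zero (ξ : Seq2) : setI f0 f1 d 0 ξ = Icc (0:ℝ) 1 := rfl

lemma setI_succ (n : ℕ) (ξ : Seq2) :
    setI f0 f1 d (n+1) ξ = Icc (0:ℝ) 1 ∩ ({x | ξ 0 = 1 → d ≤ x} ∩
      ((if ξ 0 = 0 then f0 else f1) ⁻¹' setI f0 f1 d n (shift ξ))) := by
  ext x
  simp only [setI, mem_setOf_eq, mem_inter_iff, mem_preimage]
  exact Iff.rfl

lemma setI_antitone (n : ℕ) (ξ : Seq2) : setI f0 f1 d (n+1) ξ ⊆ setI f0 f1 d n ξ :=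
  fun _ h => admN_of_succ h

lemma isClosed_setI (h1 : H1 f0 f1 df0 df1 d) (n : ℕ) (ξ : Seq2) :
    IsClosed (setI f0 f1 d n ξ) := by
  induction n generalizing ξ with
  | zero => exact isClosed_Icc
  | succ n ih =>
      rw [setI_succ]
      refine isClosed_Icc.inter (IsClosed.inter ?_ ?_)
      · by_cases h : ξ 0 = 1
        · simp only [h, forall_true_left]
          exact isClosed_Ici
        · have : {x : ℝ | ξ 0 = 1 → d ≤ x} = univ := by
            ext x; simp [h]
          rw [this]; exact isClosed_univ
      · refine IsClosed.preimage ?_ (ih (shift ξ))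
        by_cases h : ξ 0 = 0
        · simp only [h, if_true]; exact cont0 h1
        · simp only [h, if_false]; exact cont1 h1

lemma bddBelow_setI (n : ℕ) (ξ : Seq2) : BddBelow (setI f0 f1 d n ξ) :=
  ⟨0, fun _ hx => (admN_mem_Icc hx).1⟩

lemma aN_mem (h1 : H1 f0 f1 df0 df1 d) {n : ℕ} {ξ : Seq2} (hne : (setI f0 f1 d n ξ).Nonempty) :
    aN f0 f1 d n ξ ∈ setI f0 f1 d n ξ :=
  (isClosed_setI h1 n ξ).csInf_mem hne (bddBelow_setI n ξ)

lemma aN_mem_Icc (n : ℕ) (ξ : Seq2) : aN f0 f1 d n ξ ∈ Icc (0:ℝ) 1 := by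
  by_cases hne : (setI f0 f1 d n ξ).Nonempty
  · constructor
    · exact le_csInf hne (fun x hx => (admN_mem_Icc hx).1)
    · obtain ⟨x, hx⟩ := hne
      exact le_trans (csInf_le (bddBelow_setI n ξ) hx) (admN_mem_Icc hx).2
  · rw [not_nonempty_iff_eq_empty] at hne
    unfold aN
    rw [hne, Real.sInf_empty]
    simp

lemma aN_mono (h1 : H1 f0 f1 df0 df1 d) {ξ : Seq2} (hS : ξ ∈ SetS f0 f1 d) (n : ℕ) :
    aN f0 f1 d n ξ ≤ aN f0 f1 d (n+1) ξ :=
  csInf_le_csInf (bddBelow_setI n ξ) (hS (n+1)) (setI_antitone n ξ)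

lemma aN_monotone (h1 : H1 f0 f1 df0 df1 d) {ξ : Seq2} (hS : ξ ∈ SetS f0 f1 d) :
    Monotone (fun n => aN f0 f1 d n ξ) :=
  monotone_nat_of_le_succ (aN_mono h1 hS)

lemma aN_zero (ξ : Seq2) : aN f0 f1 d 0 ξ = 0 := by
  unfold aN
  rw [setI_zero, csInf_Icc zero_le_one]

end AdmFacts

/-! ## the lower spine function φ⁺ -/

section Phi
variable {f0 f1 df0 df1 : ℝ → ℝ} {d : ℝ}

noncomputable def phiP (f0 f1 : ℝ → ℝ) (d : ℝ) (ξ : Seq2) : ℝ := ⨆ n, aN f0 f1 d n ξ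

lemma bddAbove_range_aN (ξ : Seq2) : BddAbove (range (fun n => aN f0 f1 d n ξ)) :=
  ⟨1, by rintro x ⟨n, rfl⟩; exact (aN_mem_Icc n ξ).2⟩

lemma aN_le_phiP (n : ℕ) (ξ : Seq2) : aN f0 f1 d n ξ ≤ phiP f0 f1 d ξ :=
  le_ciSup (bddAbove_range_aN ξ) n

lemma phiP_mem_Icc (ξ : Seq2) : phiP f0 f1 d ξ ∈ Icc (0:ℝ) 1 := by
  constructor
  · exact le_trans (aN_mem_Icc 0 ξ).1 (aN_le_phiP 0 ξ)
  · exact ciSup_le (fun n => (aN_mem_Icc n ξ).2)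

lemma tendsto_aN (h1 : H1 f0 f1 df0 df1 d) {ξ : Seq2} (hS : ξ ∈ SetS f0 f1 d) :
    Tendsto (fun n => aN f0 f1 d n ξ) atTop (nhds (phiP f0 f1 d ξ)) :=
  tendsto_atTop_ciSup (aN_monotone h1 hS) (bddAbove_range_aN ξ)

lemma phiP_ge_d (h1 : H1 f0 f1 df0 df1 d) {ξ : Seq2} (hS : ξ ∈ SetS f0 f1 d)
    (hξ : ξ 0 = 1) : d ≤ phiP f0 f1 d ξ := by
  have h := aN_mem h1 (hS 1)
  have h2 : d ≤ aN f0 f1 d 1 ξ := h.2.1 hξ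
  exact le_trans h2 (aN_le_phiP 1 ξ)

/-- Exact equivariance of the finite-horizon infima. -/
lemma aN_equivariant (h1 : H1 f0 f1 df0 df1 d) {ξ : Seq2} (hS : ξ ∈ SetS f0 f1 d)
    (hS' : shift ξ ∈ SetS f0 f1 d) (n : ℕ) :
    (if ξ 0 = 0 then f0 else f1) (aN f0 f1 d (n+1) ξ) = aN f0 f1 d n (shift ξ) := by
  have hmem := aN_mem h1 (hS (n+1))
  have hmem' := aN_mem h1 (hS' n)
  -- the image of the inf is admissible one step later
  have hup : aN f0 f1 d n (shift ξ) ≤ (if ξ 0 = 0 then f0 else f1) (aN f0 f1 d (n+1) ξ) :=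
    csInf_le (bddBelow_setI n (shift ξ)) hmem.2.2
  -- the inf one step later has an admissible preimage
  have hdown : (if ξ 0 = 0 then f0 else f1) (aN f0 f1 d (n+1) ξ) ≤ aN f0 f1 d n (shift ξ) := by
    rcases fin2_cases (ξ 0) with h0 | h0
    · -- symbol 0 : use surjectivity of f0
      obtain ⟨y, hy, hfy⟩ := h1.surj0 (admN_mem_Icc hmem')
      have hyadm : y ∈ setI f0 f1 d (n+1) ξ := by
        refine ⟨hy, ?_, ?_⟩
        · intro habs; rw [h0] at habs; exact absurd habs (by decide)
        · rw [if_pos h0, hfy]; exact hmem'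
      have := csInf_le (bddBelow_setI (n+1) ξ) hyadm
      rw [if_pos h0]
      calc f0 (aN f0 f1 d (n+1) ξ) ≤ f0 y := h1.mono0.monotone this
        _ = aN f0 f1 d n (shift ξ) := hfy
    · -- symbol 1 : intermediate value theorem for f1 on [d,1]
      have h0' : ¬ (ξ 0 = 0) := by rw [h0]; decide
      -- upper bound: the inf one step later is at most f1 1
      obtain ⟨w, hw⟩ := hS (n+1)
      have hwup : aN f0 f1 d n (shift ξ) ≤ f1 1 := by
        have hw1 : (if ξ 0 = 0 then f0 else f1) w ∈ setI f0 f1 d n (shift ξ) := hw.2.2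
        rw [if_neg h0'] at hw1
        calc aN f0 f1 d n (shift ξ) ≤ f1 w := csInf_le (bddBelow_setI n (shift ξ)) hw1
          _ ≤ f1 1 := h1.mono1.monotone (admN_mem_Icc hw).2
      have hmemIcc : aN f0 f1 d n (shift ξ) ∈ Icc (f1 d) (f1 1) := by
        rw [h1.f1_d]
        exact ⟨(aN_mem_Icc n (shift ξ)).1, hwup⟩
      obtain ⟨y, hy, hfy⟩ := intermediate_value_Icc h1.d_mem.2.le (cont1 h1).continuousOn hmemIcc
      have hyadm : y ∈ setI f0 f1 d (n+1) ξ := by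
        refine ⟨⟨le_trans h1.d_mem.1.le hy.1, hy.2⟩, fun _ => hy.1, ?_⟩
        · rw [if_neg h0', hfy]; exact hmem'
      have := csInf_le (bddBelow_setI (n+1) ξ) hyadm
      rw [if_neg h0']
      calc f1 (aN f0 f1 d (n+1) ξ) ≤ f1 y := h1.mono1.monotone this
        _ = aN f0 f1 d n (shift ξ) := hfy
  exact le_antisymm hdown hup

lemma SetG_mem_SetS {ξ : Seq2} (hG : ξ ∈ SetG f0 f1 d) : ξ ∈ SetS f0 f1 d := by
  have := hG 0
  rwa [shiftZ_zero] at this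

lemma SetG_shiftZ {ξ : Seq2} (hG : ξ ∈ SetG f0 f1 d) (k : ℤ) :
    shiftZ k ξ ∈ SetG f0 f1 d := by
  intro j
  rw [shiftZ_shiftZ]
  exact hG (j + k)

lemma SetG_shift {ξ : Seq2} (hG : ξ ∈ SetG f0 f1 d) : shift ξ ∈ SetG f0 f1 d := by
  rw [shift_eq_shiftZ]
  exact SetG_shiftZ hG 1

lemma phiP_equivariant (h1 : H1 f0 f1 df0 df1 d) {ξ : Seq2} (hG : ξ ∈ SetG f0 f1 d) :
    (if ξ 0 = 0 then f0 else f1) (phiP f0 f1 d ξ) = phiP f0 f1 d (shift ξ) := by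
  have hS := SetG_mem_SetS hG
  have hS' := SetG_mem_SetS (SetG_shift hG)
  have hcont : Continuous (if ξ 0 = 0 then f0 else f1) := by
    by_cases h : ξ 0 = 0
    · simp only [h, if_true]; exact cont0 h1
    · simp only [h, if_false]; exact cont1 h1
  have hlim1 : Tendsto (fun n => aN f0 f1 d (n+1) ξ) atTop (nhds (phiP f0 f1 d ξ)) :=
    (tendsto_aN h1 hS).comp (tendsto_add_atTop_nat 1)
  have hlim2 : Tendsto (fun n => (if ξ 0 = 0 then f0 else f1) (aN f0 f1 d (n+1) ξ)) atTop
      (nhds ((if ξ 0 = 0 then f0 else f1) (phiP f0 f1 d ξ))) :=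
    (hcont.tendsto _).comp hlim1
  have hlim3 : Tendsto (fun n => (if ξ 0 = 0 then f0 else f1) (aN f0 f1 d (n+1) ξ)) atTop
      (nhds (phiP f0 f1 d (shift ξ))) := by
    have : (fun n => (if ξ 0 = 0 then f0 else f1) (aN f0 f1 d (n+1) ξ))
        = fun n => aN f0 f1 d n (shift ξ) := by
      funext n
      exact aN_equivariant h1 hS hS' n
    rw [this]
    exact tendsto_aN h1 hS'
  exact tendsto_nhds_unique hlim2 hlim3

end Phi

/-! ## iteration lemmas -/

section IterFacts
variable {f0 f1 df0 df1 : ℝ → ℝ} {d : ℝ}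

lemma fIter_succ_left (f0 f1 : ℝ → ℝ) (ξ : Seq2) (n : ℕ) (x : ℝ) :
    fIter f0 f1 ξ (n+1) x = fIter f0 f1 (shift ξ) n ((if ξ 0 = 0 then f0 else f1) x) := by
  induction n generalizing ξ x with
  | zero =>
      show (if ξ ((0:ℕ):ℤ) = 0 then f0 else f1) x = _
      norm_num [fIter]
  | succ n ih =>
      show (if ξ ((n+1 :ℕ):ℤ) = 0 then f0 else f1) (fIter f0 f1 ξ (n+1) x) = _
      rw [ih]
      show _ = (if (shift ξ) ((n:ℕ):ℤ) = 0 then f0 else f1)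
        (fIter f0 f1 (shift ξ) n ((if ξ 0 = 0 then f0 else f1) x))
      have : (shift ξ) ((n:ℕ):ℤ) = ξ ((n+1:ℕ):ℤ) := by
        show ξ ((n:ℤ) + 1) = _
        norm_num
      rw [this]

lemma fIter_mono (h1 : H1 f0 f1 df0 df1 d) (ξ : Seq2) (n : ℕ) :
    Monotone (fIter f0 f1 ξ n) := by
  induction n with
  | zero => exact monotone_id
  | succ n ih =>
      intro x y hxy
      show (if ξ (n:ℤ) = 0 then f0 else f1) _ ≤ (if ξ (n:ℤ) = 0 then f0 else f1) _
      by_cases h : ξ (n:ℤ) = 0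
      · simp only [h, if_true]; exact h1.mono0.monotone (ih hxy)
      · simp only [h, if_false]; exact h1.mono1.monotone (ih hxy)

lemma fIter_strictMono (h1 : H1 f0 f1 df0 df1 d) (ξ : Seq2) (n : ℕ) :
    StrictMono (fIter f0 f1 ξ n) := by
  induction n with
  | zero => exact strictMono_id
  | succ n ih =>
      intro x y hxy
      show (if ξ (n:ℤ) = 0 then f0 else f1) _ < (if ξ (n:ℤ) = 0 then f0 else f1) _
      by_cases h : ξ (n:ℤ) = 0
      · simp only [h, if_true]; exact h1.mono0 (ih hxy)
      · simp only [h, if_false]; exact h1.mono1 (ih hxy)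

/-- The orbit of `φ⁺` under the skew product. -/
lemma fIter_phiP (h1 : H1 f0 f1 df0 df1 d) {ξ : Seq2} (hG : ξ ∈ SetG f0 f1 d) (n : ℕ) :
    fIter f0 f1 ξ n (phiP f0 f1 d ξ) = phiP f0 f1 d (shiftZ (n:ℤ) ξ) := by
  induction n generalizing ξ with
  | zero => rw [show ((0:ℕ):ℤ) = 0 by norm_num, shiftZ_zero]; rfl
  | succ n ih =>
      rw [fIter_succ_left, phiP_equivariant h1 hG, ih (SetG_shift hG), shiftZ_shift]
      norm_num [add_comm]

lemma fIter_aN_eq_zero (h1 : H1 f0 f1 df0 df1 d) {ξ : Seq2} (hG : ξ ∈ SetG f0 f1 d) (n : ℕ) :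
    fIter f0 f1 ξ n (aN f0 f1 d n ξ) = 0 := by
  induction n generalizing ξ with
  | zero => exact aN_zero ξ
  | succ n ih =>
      rw [fIter_succ_left,
        aN_equivariant h1 (SetG_mem_SetS hG) (SetG_mem_SetS (SetG_shift hG)) n]
      exact ih (SetG_shift hG)

/-- forward admissibility of `φ⁺`. -/
lemma phiP_forward (h1 : H1 f0 f1 df0 df1 d) {ξ : Seq2} (hG : ξ ∈ SetG f0 f1 d) :
    forwardAdmissible f0 f1 d ξ (phiP f0 f1 d ξ) := by
  intro n
  rw [fIter_phiP h1 hG n]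
  refine ⟨phiP_mem_Icc _, fun hξ => ?_⟩
  refine phiP_ge_d h1 (SetG_mem_SetS (SetG_shiftZ hG (n:ℤ))) ?_
  show ξ (0 + (n:ℤ)) = 1
  rwa [zero_add]

/-- backward admissibility of `φ⁺`. -/
lemma phiP_backward (h1 : H1 f0 f1 df0 df1 d) {ξ : Seq2} (hG : ξ ∈ SetG f0 f1 d) :
    backwardAdmissible f0 f1 d ξ (phiP f0 f1 d ξ) := by
  refine ⟨fun m => phiP f0 f1 d (shiftZ (-(m:ℤ)) ξ), ?_, ?_⟩
  · show phiP f0 f1 d (shiftZ (-((0:ℕ):ℤ)) ξ) = phiP f0 f1 d ξ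
    rw [show (-((0:ℕ):ℤ)) = 0 by norm_num, shiftZ_zero]
  · intro m
    set η : Seq2 := shiftZ (-((m:ℕ):ℤ) - 1) ξ with hη
    have hηG : η ∈ SetG f0 f1 d := SetG_shiftZ hG _
    have hsymb : η 0 = ξ (-(m:ℤ) - 1) := by
      show ξ (0 + (-((m:ℕ):ℤ) - 1)) = _
      norm_num
    have hkey : (if η 0 = 0 then f0 else f1) (phiP f0 f1 d η) = phiP f0 f1 d (shift η) := by
      exact phiP_equivariant h1 hηG
    have hshift : shift η = shiftZ (-(m:ℤ)) ξ := by
      rw [hη, shift_shiftZ]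
      norm_num
    have hidx : shiftZ (-((m+1:ℕ)):ℤ) ξ = η := by
      rw [hη]
      congr 1
      push_cast
      ring
    refine ⟨phiP_mem_Icc _, ?_, ?_⟩
    · intro h0
      show f0 (phiP f0 f1 d (shiftZ (-((m+1:ℕ):ℤ)) ξ)) = phiP f0 f1 d (shiftZ (-((m:ℕ):ℤ)) ξ)
      rw [hidx]
      rw [← hsymb] at h0
      rw [h0, if_pos rfl] at hkey
      rw [hkey, hshift]
    · intro h0
      rw [← hsymb] at h0
      have hkey' := hkey
      rw [h0, if_neg (by decide : ¬((1:Fin 2) = 0))] at hkey'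
      constructor
      · show d ≤ phiP f0 f1 d (shiftZ (-((m+1:ℕ):ℤ)) ξ)
        rw [hidx]
        exact phiP_ge_d h1 (SetG_mem_SetS hηG) h0
      · show f1 (phiP f0 f1 d (shiftZ (-((m+1:ℕ):ℤ)) ξ)) = phiP f0 f1 d (shiftZ (-((m:ℕ):ℤ)) ξ)
        rw [hidx, hkey', hshift]

end IterFacts

/-! ## the upper spine function `uF` -/

section Uf
variable {f0 f1 df0 df1 : ℝ → ℝ} {d : ℝ}

noncomputable def uN (f0 f1 : ℝ → ℝ) (n : ℕ) (ξ : Seq2) : ℝ :=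
  fIter f0 f1 (shiftZ (-(n:ℤ)) ξ) n 1

noncomputable def uF (f0 f1 : ℝ → ℝ) (ξ : Seq2) : ℝ := ⨅ n, max 0 (uN f0 f1 n ξ)

lemma uN_zero (ξ : Seq2) : uN f0 f1 0 ξ = 1 := rfl

lemma uN_succ_shift (n : ℕ) (ξ : Seq2) :
    uN f0 f1 (n+1) (shift ξ) = (if ξ 0 = 0 then f0 else f1) (uN f0 f1 n ξ) := by
  have hη : shiftZ (-((n+1:ℕ):ℤ)) (shift ξ) = shiftZ (-(n:ℤ)) ξ := by
    rw [shiftZ_shift]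
    congr 1
    push_cast
    ring
  show fIter f0 f1 (shiftZ (-((n+1:ℕ):ℤ)) (shift ξ)) (n+1) 1 = _
  rw [hη]
  show (if (shiftZ (-(n:ℤ)) ξ) ((n:ℕ):ℤ) = 0 then f0 else f1) (fIter f0 f1 (shiftZ (-(n:ℤ)) ξ) n 1) = _
  have : (shiftZ (-(n:ℤ)) ξ) ((n:ℕ):ℤ) = ξ 0 := by
    show ξ ((n:ℤ) + -(n:ℤ)) = ξ 0
    norm_num
  rw [this]
  rfl

lemma uN_decomp (n : ℕ) (ξ : Seq2) :
    uN f0 f1 (n+1) ξ = fIter f0 f1 (shiftZ (-(n:ℤ)) ξ) n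
      ((if ξ (-(n:ℤ) - 1) = 0 then f0 else f1) 1) := by
  show fIter f0 f1 (shiftZ (-((n+1:ℕ):ℤ)) ξ) (n+1) 1 = _
  rw [fIter_succ_left]
  have h1 : shift (shiftZ (-((n+1:ℕ):ℤ)) ξ) = shiftZ (-(n:ℤ)) ξ := by
    rw [shift_shiftZ]
    congr 1
    push_cast
    ring
  have h2 : (shiftZ (-((n+1:ℕ):ℤ)) ξ) 0 = ξ (-(n:ℤ) - 1) := by
    show ξ (0 + -((n+1:ℕ):ℤ)) = _
    congr 1
    push_cast
    ring
  rw [h1, h2]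

lemma uN_antitone_succ (h1 : H1 f0 f1 df0 df1 d) (n : ℕ) (ξ : Seq2) :
    uN f0 f1 (n+1) ξ ≤ uN f0 f1 n ξ := by
  rw [uN_decomp]
  refine fIter_mono h1 _ n ?_
  by_cases h : ξ (-(n:ℤ) - 1) = 0
  · simp only [h, if_true]
    rw [f0_one h1]
  · simp only [h, if_false]
    exact (f1_one_lt h1).le

lemma uN_antitone (h1 : H1 f0 f1 df0 df1 d) (ξ : Seq2) :
    Antitone (fun n => uN f0 f1 n ξ) :=
  antitone_nat_of_succ_le (fun n => uN_antitone_succ h1 n ξ)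

lemma uN_le_one (h1 : H1 f0 f1 df0 df1 d) (n : ℕ) (ξ : Seq2) : uN f0 f1 n ξ ≤ 1 := by
  have h := uN_antitone h1 ξ (Nat.zero_le n)
  simp only at h
  rwa [uN_zero] at h

lemma bddBelow_range_uN (ξ : Seq2) : BddBelow (range (fun n => max 0 (uN f0 f1 n ξ))) :=
  ⟨0, by rintro x ⟨n, rfl⟩; exact le_max_left _ _⟩

lemma uF_le_max (n : ℕ) (ξ : Seq2) : uF f0 f1 ξ ≤ max 0 (uN f0 f1 n ξ) :=
  ciInf_le (bddBelow_range_uN ξ) n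

lemma uF_mem_Icc (h1 : H1 f0 f1 df0 df1 d) (ξ : Seq2) : uF f0 f1 ξ ∈ Icc (0:ℝ) 1 := by
  constructor
  · exact le_ciInf (fun n => le_max_left _ _)
  · refine le_trans (uF_le_max 0 ξ) ?_
    rw [uN_zero]
    norm_num

lemma phiP_le_uN (h1 : H1 f0 f1 df0 df1 d) {ξ : Seq2} (hG : ξ ∈ SetG f0 f1 d) (n : ℕ) :
    phiP f0 f1 d ξ ≤ uN f0 f1 n ξ := by
  have hηG : shiftZ (-(n:ℤ)) ξ ∈ SetG f0 f1 d := SetG_shiftZ hG _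
  have horb := fIter_phiP h1 hηG n
  rw [shiftZ_shiftZ] at horb
  norm_num at horb
  rw [shiftZ_zero] at horb
  calc phiP f0 f1 d ξ = fIter f0 f1 (shiftZ (-(n:ℤ)) ξ) n (phiP f0 f1 d (shiftZ (-(n:ℤ)) ξ)) :=
        horb.symm
    _ ≤ fIter f0 f1 (shiftZ (-(n:ℤ)) ξ) n 1 :=
        fIter_mono h1 _ n (phiP_mem_Icc _).2
    _ = uN f0 f1 n ξ := rfl

lemma max_uN_eq (h1 : H1 f0 f1 df0 df1 d) {ξ : Seq2} (hG : ξ ∈ SetG f0 f1 d) (n : ℕ) :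
    max 0 (uN f0 f1 n ξ) = uN f0 f1 n ξ :=
  max_eq_right (le_trans (phiP_mem_Icc ξ).1 (phiP_le_uN h1 hG n))

lemma phiP_le_uF (h1 : H1 f0 f1 df0 df1 d) {ξ : Seq2} (hG : ξ ∈ SetG f0 f1 d) :
    phiP f0 f1 d ξ ≤ uF f0 f1 ξ := by
  refine le_ciInf (fun n => ?_)
  rw [max_uN_eq h1 hG n]
  exact phiP_le_uN h1 hG n

lemma tendsto_uN (h1 : H1 f0 f1 df0 df1 d) {ξ : Seq2} (hG : ξ ∈ SetG f0 f1 d) :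
    Tendsto (fun n => uN f0 f1 n ξ) atTop (nhds (uF f0 f1 ξ)) := by
  have hanti : Antitone (fun n => max 0 (uN f0 f1 n ξ)) :=
    fun m n h => max_le_max (le_refl 0) (uN_antitone h1 ξ h)
  have h0 : Tendsto (fun n => max 0 (uN f0 f1 n ξ)) atTop (nhds (uF f0 f1 ξ)) :=
    tendsto_atTop_ciInf hanti (bddBelow_range_uN ξ)
  have heq : (fun n => max 0 (uN f0 f1 n ξ)) = fun n => uN f0 f1 n ξ := by
    funext n
    exact max_uN_eq h1 hG n
  rw [heq] at h0
  exact h0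

lemma uF_equivariant (h1 : H1 f0 f1 df0 df1 d) {ξ : Seq2} (hG : ξ ∈ SetG f0 f1 d) :
    (if ξ 0 = 0 then f0 else f1) (uF f0 f1 ξ) = uF f0 f1 (shift ξ) := by
  have hcont : Continuous (if ξ 0 = 0 then f0 else f1) := by
    by_cases h : ξ 0 = 0
    · simp only [h, if_true]; exact cont0 h1
    · simp only [h, if_false]; exact cont1 h1
  have hlim2 : Tendsto (fun n => (if ξ 0 = 0 then f0 else f1) (uN f0 f1 n ξ)) atTop
      (nhds ((if ξ 0 = 0 then f0 else f1) (uF f0 f1 ξ))) :=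
    (hcont.tendsto _).comp (tendsto_uN h1 hG)
  have hlim3 : Tendsto (fun n => (if ξ 0 = 0 then f0 else f1) (uN f0 f1 n ξ)) atTop
      (nhds (uF f0 f1 (shift ξ))) := by
    have heq : (fun n => (if ξ 0 = 0 then f0 else f1) (uN f0 f1 n ξ))
        = fun n => uN f0 f1 (n+1) (shift ξ) := by
      funext n
      exact (uN_succ_shift n ξ).symm
    rw [heq]
    exact (tendsto_uN h1 (SetG_shift hG)).comp (tendsto_add_atTop_nat 1)
  exact tendsto_nhds_unique hlim2 hlim3

lemma uF_ge_d (h1 : H1 f0 f1 df0 df1 d) {ξ : Seq2} (hG : ξ ∈ SetG f0 f1 d)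
    (hξ : ξ 0 = 1) : d ≤ uF f0 f1 ξ :=
  le_trans (phiP_ge_d h1 (SetG_mem_SetS hG) hξ) (phiP_le_uF h1 hG)

lemma fIter_uF (h1 : H1 f0 f1 df0 df1 d) {ξ : Seq2} (hG : ξ ∈ SetG f0 f1 d) (n : ℕ) :
    fIter f0 f1 ξ n (uF f0 f1 ξ) = uF f0 f1 (shiftZ (n:ℤ) ξ) := by
  induction n generalizing ξ with
  | zero => rw [show ((0:ℕ):ℤ) = 0 by norm_num, shiftZ_zero]; rfl
  | succ n ih =>
      rw [fIter_succ_left, uF_equivariant h1 hG, ih (SetG_shift hG), shiftZ_shift]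
      norm_num [add_comm]

lemma uF_forward (h1 : H1 f0 f1 df0 df1 d) {ξ : Seq2} (hG : ξ ∈ SetG f0 f1 d) :
    forwardAdmissible f0 f1 d ξ (uF f0 f1 ξ) := by
  intro n
  rw [fIter_uF h1 hG n]
  refine ⟨uF_mem_Icc h1 _, fun hξ => ?_⟩
  refine uF_ge_d h1 (SetG_shiftZ hG (n:ℤ)) ?_
  show ξ (0 + (n:ℤ)) = 1
  rwa [zero_add]

lemma uF_backward (h1 : H1 f0 f1 df0 df1 d) {ξ : Seq2} (hG : ξ ∈ SetG f0 f1 d) :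
    backwardAdmissible f0 f1 d ξ (uF f0 f1 ξ) := by
  refine ⟨fun m => uF f0 f1 (shiftZ (-(m:ℤ)) ξ), ?_, ?_⟩
  · show uF f0 f1 (shiftZ (-((0:ℕ):ℤ)) ξ) = uF f0 f1 ξ
    rw [show (-((0:ℕ):ℤ)) = 0 by norm_num, shiftZ_zero]
  · intro m
    set η : Seq2 := shiftZ (-((m:ℕ):ℤ) - 1) ξ with hη
    have hηG : η ∈ SetG f0 f1 d := SetG_shiftZ hG _
    have hsymb : η 0 = ξ (-(m:ℤ) - 1) := by
      show ξ (0 + (-((m:ℕ):ℤ) - 1)) = _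
      norm_num
    have hkey : (if η 0 = 0 then f0 else f1) (uF f0 f1 η) = uF f0 f1 (shift η) :=
      uF_equivariant h1 hηG
    have hshift : shift η = shiftZ (-(m:ℤ)) ξ := by
      rw [hη, shift_shiftZ]
      norm_num
    have hidx : shiftZ (-((m+1:ℕ)):ℤ) ξ = η := by
      rw [hη]
      congr 1
      push_cast
      ring
    refine ⟨uF_mem_Icc h1 _, ?_, ?_⟩
    · intro h0
      show f0 (uF f0 f1 (shiftZ (-((m+1:ℕ):ℤ)) ξ)) = uF f0 f1 (shiftZ (-((m:ℕ):ℤ)) ξ)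
      rw [hidx]
      rw [← hsymb] at h0
      rw [h0, if_pos rfl] at hkey
      rw [hkey, hshift]
    · intro h0
      rw [← hsymb] at h0
      have hkey' := hkey
      rw [h0, if_neg (by decide : ¬((1:Fin 2) = 0))] at hkey'
      constructor
      · show d ≤ uF f0 f1 (shiftZ (-((m+1:ℕ):ℤ)) ξ)
        rw [hidx]
        exact uF_ge_d h1 hηG h0
      · show f1 (uF f0 f1 (shiftZ (-((m+1:ℕ):ℤ)) ξ)) = uF f0 f1 (shiftZ (-((m:ℕ):ℤ)) ξ)
        rw [hidx, hkey', hshift]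

end Uf

/-! ## strictness -/

section Strict
variable {f0 f1 df0 df1 : ℝ → ℝ} {d : ℝ}

lemma admN_zero_symbols (h1 : H1 f0 f1 df0 df1 d) :
    ∀ (n : ℕ) (ξ : Seq2), admN f0 f1 d n ξ 0 → ∀ j : ℕ, j < n → ξ (j:ℤ) = 0 := by
  intro n
  induction n with
  | zero => intro ξ _ j hj; omega
  | succ n ih =>
      intro ξ h j hj
      obtain ⟨hIcc, hd, hnext⟩ := h
      have hξ0 : ξ 0 = 0 := by
        rcases fin2_cases (ξ 0) with h0 | h0
        · exact h0
        · exact absurd (hd h0) (by linarith [h1.d_mem.1])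
      rw [if_pos hξ0, f0_zero h1] at hnext
      cases j with
      | zero => exact hξ0
      | succ j =>
          have := ih (shift ξ) hnext j (by omega)
          show ξ ((j+1:ℕ):ℤ) = 0
          have hcast : ((j+1:ℕ):ℤ) = (j:ℤ) + 1 := by push_cast; ring
          rw [hcast]
          exact this

lemma phiP_zero_future (h1 : H1 f0 f1 df0 df1 d) {ξ : Seq2} (hS : ξ ∈ SetS f0 f1 d)
    (hz : phiP f0 f1 d ξ = 0) : ∀ j : ℕ, ξ (j:ℤ) = 0 := by
  intro j
  have haN : aN f0 f1 d (j+1) ξ = 0 := by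
    have h1' := (aN_mem_Icc (f0 := f0) (f1 := f1) (d := d) (j+1) ξ).1
    have h2' := aN_le_phiP (f0 := f0) (f1 := f1) (d := d) (j+1) ξ
    rw [hz] at h2'
    linarith
  have hadm : admN f0 f1 d (j+1) ξ 0 := by
    have := aN_mem h1 (hS (j+1))
    rwa [haN] at this
  exact admN_zero_symbols h1 (j+1) ξ hadm j (by omega)

lemma aN_eq_phiP_imp (h1 : H1 f0 f1 df0 df1 d) {ξ : Seq2} (hG : ξ ∈ SetG f0 f1 d) (n : ℕ)
    (heq : aN f0 f1 d n ξ = phiP f0 f1 d ξ) : phiP f0 f1 d (shiftZ (n:ℤ) ξ) = 0 := by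
  have h2 := fIter_aN_eq_zero h1 hG n
  rw [heq, fIter_phiP h1 hG n] at h2
  exact h2

lemma uN_eq_uF_imp (h1 : H1 f0 f1 df0 df1 d) {ξ : Seq2} (hG : ξ ∈ SetG f0 f1 d) (n : ℕ)
    (heq : uN f0 f1 n ξ = uF f0 f1 ξ) : ∀ m : ℕ, n ≤ m → ξ (-(m:ℤ) - 1) = 0 := by
  have hconst : ∀ m : ℕ, n ≤ m → uN f0 f1 m ξ = uF f0 f1 ξ := by
    intro m hm
    have hle : uN f0 f1 m ξ ≤ uF f0 f1 ξ := by
      rw [← heq]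
      exact uN_antitone h1 ξ hm
    have hge : uF f0 f1 ξ ≤ uN f0 f1 m ξ := by
      have := uF_le_max (f0 := f0) (f1 := f1) m ξ
      rwa [max_uN_eq h1 hG m] at this
    linarith
  intro m hm
  have h2 : uN f0 f1 (m+1) ξ = uN f0 f1 m ξ := by
    rw [hconst (m+1) (by omega), hconst m hm]
  rw [uN_decomp] at h2
  have hinj := (fIter_strictMono h1 (shiftZ (-(m:ℤ)) ξ) m).injective
  have h3 : (if ξ (-(m:ℤ) - 1) = 0 then f0 else f1) 1 = 1 := hinj h2
  by_contra hne
  rcases fin2_cases (ξ (-(m:ℤ) - 1)) with h0 | h0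
  · exact hne h0
  · rw [if_neg (by rw [h0]; decide)] at h3
    exact absurd h3 (ne_of_lt (f1_one_lt h1))

end Strict

/-! ## measurability -/

section Meas
variable {f0 f1 df0 df1 : ℝ → ℝ} {d : ℝ}

/-- window read-off map -/
def wordMap (a : ℤ) (N : ℕ) : Seq2 → (Fin N → Fin 2) := fun ξ i => ξ (a + (i:ℤ))

/-- extension of a finite word by zeros -/
def wordExt (a : ℤ) (N : ℕ) : (Fin N → Fin 2) → Seq2 := fun v m =>
  if hm : 0 ≤ m - a ∧ (m - a).toNat < N then v ⟨(m - a).toNat, hm.2⟩ else 0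

lemma measurable_wordMap (a : ℤ) (N : ℕ) : Measurable (wordMap a N) :=
  measurable_pi_lambda _ (fun i => measurable_pi_apply _)

lemma wordExt_wordMap (a : ℤ) (N : ℕ) (ξ : Seq2) {i : ℕ} (hi : i < N) :
    wordExt a N (wordMap a N ξ) (a + (i:ℤ)) = ξ (a + (i:ℤ)) := by
  have h0 : (0:ℤ) ≤ (a + (i:ℤ)) - a := by omega
  have h1 : ((a + (i:ℤ)) - a).toNat = i := by omega
  have h2 : ((a + (i:ℤ)) - a).toNat < N := by omega
  unfold wordExt
  rw [dif_pos ⟨h0, h2⟩]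
  unfold wordMap
  congr 1
  simp [h1]

lemma measurable_of_finite_dependence {β : Type*} [MeasurableSpace β] (g : Seq2 → β)
    (a : ℤ) (N : ℕ)
    (h : ∀ ξ ξ' : Seq2, (∀ i : ℕ, i < N → ξ (a + (i:ℤ)) = ξ' (a + (i:ℤ))) → g ξ = g ξ') :
    Measurable g := by
  have hfac : g = (fun v => g (wordExt a N v)) ∘ (wordMap a N) := by
    funext ξ
    exact h ξ (wordExt a N (wordMap a N ξ)) (fun i hi => (wordExt_wordMap a N ξ hi).symm)
  rw [hfac]
  exact (measurable_of_countable _).comp (measurable_wordMap a N)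

lemma measurableSet_of_finite_dependence (S : Set Seq2) (a : ℤ) (N : ℕ)
    (h : ∀ ξ ξ' : Seq2, (∀ i : ℕ, i < N → ξ (a + (i:ℤ)) = ξ' (a + (i:ℤ))) → (ξ ∈ S ↔ ξ' ∈ S)) :
    MeasurableSet S := by
  have hfac : S = (wordMap a N) ⁻¹' {v | wordExt a N v ∈ S} := by
    ext ξ
    simp only [mem_preimage, mem_setOf_eq]
    exact h ξ (wordExt a N (wordMap a N ξ)) (fun i hi => (wordExt_wordMap a N ξ hi).symm)
  rw [hfac]
  exact (Set.to_countable _).measurableSet.preimage (measurable_wordMap a N)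

lemma admN_congr (n : ℕ) {ξ ξ' : Seq2} (h : ∀ i : ℕ, i < n → ξ (i:ℤ) = ξ' (i:ℤ)) (x : ℝ) :
    admN f0 f1 d n ξ x ↔ admN f0 f1 d n ξ' x := by
  induction n generalizing ξ ξ' x with
  | zero => rfl
  | succ n ih =>
      have h0 : ξ 0 = ξ' 0 := by
        have := h 0 (by omega)
        simpa using this
      show (_ ∧ _ ∧ _) ↔ (_ ∧ _ ∧ _)
      rw [h0]
      have hsh : ∀ i : ℕ, i < n → (shift ξ) (i:ℤ) = (shift ξ') (i:ℤ) := by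
        intro i hi
        show ξ ((i:ℤ)+1) = ξ' ((i:ℤ)+1)
        have hc : ((i:ℤ)+1) = ((i+1:ℕ):ℤ) := by push_cast; ring
        rw [hc]
        exact h (i+1) (by omega)
      rw [ih hsh]

lemma aN_congr (n : ℕ) {ξ ξ' : Seq2} (h : ∀ i : ℕ, i < n → ξ (i:ℤ) = ξ' (i:ℤ)) :
    aN f0 f1 d n ξ = aN f0 f1 d n ξ' := by
  unfold aN
  congr 1
  ext x
  exact admN_congr n h x

lemma measurable_aN (n : ℕ) : Measurable (aN f0 f1 d n) := by
  refine measurable_of_finite_dependence _ 0 n (fun ξ ξ' h => ?_)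
  refine aN_congr n (fun i hi => ?_)
  have := h i hi
  simpa using this

lemma measurable_phiP : Measurable (phiP f0 f1 d) :=
  Measurable.iSup (fun n => measurable_aN n)

lemma fIter_congr (n : ℕ) {ξ ξ' : Seq2} (h : ∀ i : ℕ, i < n → ξ (i:ℤ) = ξ' (i:ℤ)) (x : ℝ) :
    fIter f0 f1 ξ n x = fIter f0 f1 ξ' n x := by
  induction n generalizing x with
  | zero => rfl
  | succ n ih =>
      show (if ξ (n:ℤ) = 0 then f0 else f1) _ = (if ξ' (n:ℤ) = 0 then f0 else f1) _
      rw [h n (by omega), ih (fun i hi => h i (by omega)) x]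

lemma uN_congr (n : ℕ) {ξ ξ' : Seq2}
    (h : ∀ i : ℕ, i < n → ξ (-(n:ℤ) + (i:ℤ)) = ξ' (-(n:ℤ) + (i:ℤ))) :
    uN f0 f1 n ξ = uN f0 f1 n ξ' := by
  unfold uN
  refine fIter_congr n (fun i hi => ?_) 1
  show ξ ((i:ℤ) + -(n:ℤ)) = ξ' ((i:ℤ) + -(n:ℤ))
  have hc : ((i:ℤ) + -(n:ℤ)) = (-(n:ℤ) + (i:ℤ)) := by ring
  rw [hc]
  exact h i hi

lemma measurable_uN (n : ℕ) : Measurable (uN f0 f1 n) :=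
  measurable_of_finite_dependence _ (-(n:ℤ)) n (fun ξ ξ' h => uN_congr n h)

lemma measurable_uF : Measurable (uF f0 f1) :=
  Measurable.iInf (fun n => measurable_const.max (measurable_uN n))

lemma setI_congr (n : ℕ) {ξ ξ' : Seq2} (h : ∀ i : ℕ, i < n → ξ (i:ℤ) = ξ' (i:ℤ)) :
    setI f0 f1 d n ξ = setI f0 f1 d n ξ' := by
  ext x
  exact admN_congr n h x

lemma measurableSet_SetS : MeasurableSet (SetS f0 f1 d) := by
  have : SetS f0 f1 d = ⋂ n, {ξ | (setI f0 f1 d n ξ).Nonempty} := by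
    ext ξ
    simp [SetS, mem_iInter]
  rw [this]
  refine MeasurableSet.iInter (fun n => ?_)
  refine measurableSet_of_finite_dependence _ 0 n (fun ξ ξ' h => ?_)
  have hs : setI f0 f1 d n ξ = setI f0 f1 d n ξ' := by
    refine setI_congr n (fun i hi => ?_)
    have := h i hi
    simpa using this
  simp only [mem_setOf_eq, hs]

lemma measurableSet_SetG : MeasurableSet (SetG f0 f1 d) := by
  have : SetG f0 f1 d = ⋂ k : ℤ, (shiftZ k) ⁻¹' (SetS f0 f1 d) := by
    ext ξ
    simp [SetG, mem_iInter, mem_preimage]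
  rw [this]
  exact MeasurableSet.iInter (fun k => measurableSet_SetS.preimage (measurable_shiftZ k))

end Meas

/-! ## `SigmaA ⊆ SetG` -/

section Inclusion
variable {f0 f1 df0 df1 : ℝ → ℝ} {d : ℝ}

lemma fwd_shift {ξ : Seq2} {x : ℝ} (h : forwardAdmissible f0 f1 d ξ x) :
    forwardAdmissible f0 f1 d (shift ξ) ((if ξ 0 = 0 then f0 else f1) x) := by
  intro n
  rw [← fIter_succ_left]
  have hidx : (shift ξ) (n:ℤ) = ξ ((n+1:ℕ):ℤ) := by
    show ξ ((n:ℤ)+1) = _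
    norm_num
  rw [hidx]
  exact h (n+1)

lemma fwd_admN {ξ : Seq2} {x : ℝ} (h : forwardAdmissible f0 f1 d ξ x) (n : ℕ) :
    admN f0 f1 d n ξ x := by
  induction n generalizing ξ x with
  | zero =>
      have h0 := (h 0).1
      exact h0
  | succ n ih =>
      refine ⟨(h 0).1, ?_, ih (fwd_shift h)⟩
      intro h1
      have := (h 0).2
      exact this (by exact_mod_cast h1)

lemma fwd_step_back {η : Seq2} {z : ℝ} (hz : z ∈ Icc (0:ℝ) 1) (hd : η 0 = 1 → d ≤ z)
    (h : forwardAdmissible f0 f1 d (shift η) ((if η 0 = 0 then f0 else f1) z)) :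
    forwardAdmissible f0 f1 d η z := by
  intro n
  cases n with
  | zero => exact ⟨hz, fun h1 => hd (by exact_mod_cast h1)⟩
  | succ n =>
      rw [fIter_succ_left]
      have hidx : η ((n+1:ℕ):ℤ) = (shift η) (n:ℤ) := by
        show _ = η ((n:ℤ)+1)
        norm_num
      rw [hidx]
      exact h n

lemma fwd_shiftZ_nat {ξ : Seq2} {x : ℝ} (h : forwardAdmissible f0 f1 d ξ x) (m : ℕ) :
    forwardAdmissible f0 f1 d (shiftZ (m:ℤ) ξ) (fIter f0 f1 ξ m x) := by
  induction m generalizing ξ x with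
  | zero =>
      rw [show ((0:ℕ):ℤ) = 0 by norm_num, shiftZ_zero]
      exact h
  | succ m ih =>
      have h1 := ih (fwd_shift h)
      rw [← fIter_succ_left] at h1
      have h2 : shiftZ ((m:ℕ):ℤ) (shift ξ) = shiftZ ((m+1:ℕ):ℤ) ξ := by
        rw [shiftZ_shift]
        norm_num
      rwa [h2] at h1

lemma bwd_fwd_chain {ξ : Seq2} {x : ℝ} {y : ℕ → ℝ}
    (hfwd : forwardAdmissible f0 f1 d ξ x)
    (hy0 : y 0 = x)
    (hy : ∀ m : ℕ, y m ∈ Icc (0:ℝ) 1 ∧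
      (ξ (-(m : ℤ) - 1) = 0 → f0 (y (m + 1)) = y m) ∧
      (ξ (-(m : ℤ) - 1) = 1 → d ≤ y (m + 1) ∧ f1 (y (m + 1)) = y m)) (m : ℕ) :
    forwardAdmissible f0 f1 d (shiftZ (-(m:ℤ)) ξ) (y m) := by
  induction m with
  | zero =>
      rw [show (-((0:ℕ):ℤ)) = 0 by norm_num, shiftZ_zero, hy0]
      exact hfwd
  | succ m ih =>
      set η : Seq2 := shiftZ (-((m+1:ℕ):ℤ)) ξ with hη
      have hshift : shift η = shiftZ (-(m:ℤ)) ξ := by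
        rw [hη, shift_shiftZ]
        congr 1
        push_cast
        ring
      have hsymb : η 0 = ξ (-(m:ℤ) - 1) := by
        show ξ (0 + -((m+1:ℕ):ℤ)) = _
        congr 1
        push_cast
        ring
      have hstep : (if η 0 = 0 then f0 else f1) (y (m+1)) = y m := by
        rcases fin2_cases (η 0) with h0 | h0
        · rw [if_pos h0]
          exact (hy m).2.1 (by rw [← hsymb]; exact h0)
        · rw [if_neg (by rw [h0]; decide)]
          exact ((hy m).2.2 (by rw [← hsymb]; exact h0)).2
      refine fwd_step_back (hy (m+1)).1 ?_ ?_
      · intro h0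
        exact ((hy m).2.2 (by rw [← hsymb]; exact h0)).1
      · rw [hstep, hshift]
        exact ih

lemma SigmaA_subset_SetG : SigmaA f0 f1 d ⊆ SetG f0 f1 d := by
  rintro ξ ⟨⟨ξ', x⟩, ⟨hfwd, hbwd⟩, rfl⟩
  obtain ⟨y, hy0, hy⟩ := hbwd
  intro k n
  rcases k with m | m
  · -- nonnegative shift : use the forward orbit
    exact ⟨fIter f0 f1 ξ' m x, fwd_admN (fwd_shiftZ_nat hfwd m) n⟩
  · -- negative shift : use the backward orbit
    have : (Int.negSucc m) = -((m+1:ℕ):ℤ) := by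
      rw [Int.negSucc_eq]
      push_cast
      ring
    rw [this]
    exact ⟨y (m+1), fwd_admN (bwd_fwd_chain hfwd hy0 hy (m+1)) n⟩

end Inclusion

/-! ## slope estimates -/

section Slope
variable {f0 f1 df0 df1 : ℝ → ℝ} {d : ℝ}

lemma df0_lower (h1 : H1 f0 f1 df0 df1 d) (h2 : H2 df0 df1 d) {x : ℝ} (hx : x ∈ Icc (0:ℝ) 1) :
    df0 1 ≤ df0 x := by
  rcases eq_or_lt_of_le hx.2 with h | h
  · rw [h]
  · exact (h2.1 hx (by norm_num) h).le

lemma df0_upper (h1 : H1 f0 f1 df0 df1 d) (h2 : H2 df0 df1 d) {x : ℝ} (hx : x ∈ Icc (0:ℝ) 1) :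
    df0 x ≤ df0 0 := by
  rcases eq_or_lt_of_le hx.1 with h | h
  · rw [← h]
  · exact (h2.1 (by norm_num) hx h).le

lemma df0_pos (h1 : H1 f0 f1 df0 df1 d) (h2 : H2 df0 df1 d) {x : ℝ} (hx : x ∈ Icc (0:ℝ) 1) :
    0 < df0 x := lt_of_lt_of_le h1.deriv0_one.1 (df0_lower h1 h2 hx)

lemma df1_lower (h1 : H1 f0 f1 df0 df1 d) (h2 : H2 df0 df1 d) {x : ℝ} (hx : x ∈ Icc d 1) :
    df1 1 ≤ df1 x := h2.2 hx ⟨h1.d_mem.2.le, le_refl 1⟩ hx.2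

lemma df1_upper (h1 : H1 f0 f1 df0 df1 d) (h2 : H2 df0 df1 d) {x : ℝ} (hx : x ∈ Icc d 1) :
    df1 x ≤ df1 d := h2.2 ⟨le_refl d, h1.d_mem.2.le⟩ hx hx.1

lemma df1_pos (h1 : H1 f0 f1 df0 df1 d) (h2 : H2 df0 df1 d) {x : ℝ} (hx : x ∈ Icc d 1) :
    0 < df1 x := lt_of_lt_of_le h1.deriv1_one (df1_lower h1 h2 hx)

lemma slope_eq (h1 : H1 f0 f1 df0 df1 d) {g dg : ℝ → ℝ} (hg : ∀ x, HasDerivAt g (dg x) x)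
    {a b : ℝ} (hab : a < b) :
    ∃ c ∈ Ioo a b, g b - g a = dg c * (b - a) := by
  have hcont : ContinuousOn g (Icc a b) :=
    (continuous_iff_continuousAt.mpr fun x => (hg x).continuousAt).continuousOn
  obtain ⟨c, hc, hceq⟩ := exists_hasDerivAt_eq_slope g dg hab hcont (fun x _ => hg x)
  refine ⟨c, hc, ?_⟩
  rw [hceq]
  exact (div_mul_cancel₀ (g b - g a) (sub_ne_zero.mpr (Ne.symm (ne_of_lt hab)))).symm

lemma slope0_le (h1 : H1 f0 f1 df0 df1 d) (h2 : H2 df0 df1 d) {a b : ℝ}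
    (ha : 0 ≤ a) (hab : a < b) (hb : b ≤ 1) :
    f0 b - f0 a ≤ df0 a * (b - a) := by
  obtain ⟨c, hc, hceq⟩ := slope_eq h1 h1.hasDeriv0 hab
  have h4 : df0 c ≤ df0 a :=
    (h2.1 ⟨ha, by linarith [hc.2]⟩ ⟨by linarith [hc.1], by linarith [hc.2]⟩ hc.1).le
  rw [hceq]
  exact mul_le_mul_of_nonneg_right h4 (by linarith)

lemma slope0_ge (h1 : H1 f0 f1 df0 df1 d) (h2 : H2 df0 df1 d) {a b : ℝ}
    (ha : 0 ≤ a) (hab : a < b) (hb : b ≤ 1) :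
    df0 b * (b - a) ≤ f0 b - f0 a := by
  obtain ⟨c, hc, hceq⟩ := slope_eq h1 h1.hasDeriv0 hab
  have h4 : df0 b ≤ df0 c :=
    (h2.1 ⟨by linarith [hc.1], by linarith [hc.2]⟩ ⟨by linarith [hc.1], hb⟩ hc.2).le
  rw [hceq]
  exact mul_le_mul_of_nonneg_right h4 (by linarith)

lemma slope1_le (h1 : H1 f0 f1 df0 df1 d) (h2 : H2 df0 df1 d) {a b : ℝ}
    (ha : d ≤ a) (hab : a < b) (hb : b ≤ 1) :
    f1 b - f1 a ≤ df1 a * (b - a) := by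
  obtain ⟨c, hc, hceq⟩ := slope_eq h1 h1.hasDeriv1 hab
  have h4 : df1 c ≤ df1 a :=
    h2.2 ⟨ha, by linarith [hc.2]⟩ ⟨by linarith [hc.1], by linarith [hc.2]⟩ hc.1.le
  rw [hceq]
  exact mul_le_mul_of_nonneg_right h4 (by linarith)

lemma slope1_ge (h1 : H1 f0 f1 df0 df1 d) (h2 : H2 df0 df1 d) {a b : ℝ}
    (ha : d ≤ a) (hab : a < b) (hb : b ≤ 1) :
    df1 b * (b - a) ≤ f1 b - f1 a := by
  obtain ⟨c, hc, hceq⟩ := slope_eq h1 h1.hasDeriv1 hab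
  have h4 : df1 b ≤ df1 c :=
    h2.2 ⟨by linarith [hc.1], by linarith [hc.2]⟩ ⟨by linarith [hc.1], hb⟩ hc.2.le
  rw [hceq]
  exact mul_le_mul_of_nonneg_right h4 (by linarith)

lemma measurable_df0 (h1 : H1 f0 f1 df0 df1 d) : Measurable df0 := by
  have : df0 = deriv f0 := funext fun x => ((h1.hasDeriv0 x).deriv).symm
  rw [this]
  exact measurable_deriv f0

lemma measurable_df1 (h1 : H1 f0 f1 df0 df1 d) : Measurable df1 := by
  have : df1 = deriv f1 := funext fun x => ((h1.hasDeriv1 x).deriv).symm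
  rw [this]
  exact measurable_deriv f1

end Slope

/-! ## null sets from ergodicity -/

section Null
variable {f0 f1 df0 df1 : ℝ → ℝ} {d : ℝ} {ν : Measure Seq2}

def ZeroFut : Set Seq2 := {ξ | ∀ j : ℕ, ξ (j:ℤ) = 0}
def ZeroPast : Set Seq2 := {ξ | ∀ j : ℕ, ξ (-(j:ℤ) - 1) = 0}

lemma measurableSet_coord (i : ℤ) (c : Fin 2) : MeasurableSet {ξ : Seq2 | ξ i = c} := by
  have h : {ξ : Seq2 | ξ i = c} = (fun ξ : Seq2 => ξ i) ⁻¹' {c} := rfl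
  rw [h]
  exact (measurable_pi_apply i) (measurableSet_singleton c)

lemma measurableSet_ZeroFut : MeasurableSet ZeroFut := by
  have : ZeroFut = ⋂ j : ℕ, {ξ : Seq2 | ξ (j:ℤ) = 0} := by
    ext ξ; simp [ZeroFut]
  rw [this]
  exact MeasurableSet.iInter (fun j => measurableSet_coord _ _)

lemma measurableSet_ZeroPast : MeasurableSet ZeroPast := by
  have : ZeroPast = ⋂ j : ℕ, {ξ : Seq2 | ξ (-(j:ℤ) - 1) = 0} := by
    ext ξ; simp [ZeroPast]
  rw [this]
  exact MeasurableSet.iInter (fun j => measurableSet_coord _ _)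

variable [IsProbabilityMeasure ν]

lemma measure_preimage_shift (hmap : ν.map shift = ν) {A : Set Seq2} (hA : MeasurableSet A) :
    ν (shift ⁻¹' A) = ν A := by
  conv_rhs => rw [← hmap]
  exact (Measure.map_apply measurable_shift hA).symm

lemma measure_preimage_shiftZ (hmap : ν.map shift = ν) (k : ℤ) {A : Set Seq2}
    (hA : MeasurableSet A) : ν (shiftZ k ⁻¹' A) = ν A := by
  induction k using Int.induction_on with
  | zero => rw [show (shiftZ 0 ⁻¹' A) = A by rw [funext shiftZ_zero]; rfl]
  | succ k ih =>
      have hcomp : shiftZ (k+1) ⁻¹' A = shift ⁻¹' (shiftZ k ⁻¹' A) := by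
        ext ξ
        simp only [mem_preimage]
        rw [show shiftZ k (shift ξ) = shiftZ (k+1) ξ from shiftZ_shift k ξ]
      rw [hcomp, measure_preimage_shift hmap (hA.preimage (measurable_shiftZ k)), ih]
  | pred k ih =>
      have hcomp : shiftZ (-k-1) ⁻¹' A = shiftZ (-1) ⁻¹' (shiftZ (-k) ⁻¹' A) := by
        ext ξ
        simp only [mem_preimage]
        rw [show shiftZ (-k) (shiftZ (-1) ξ) = shiftZ (-k + -1) ξ from shiftZ_shiftZ _ _ ξ]
        norm_num
        rw [show (-k-1 : ℤ) = (-k + -1) by ring]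
      have hm1 : ∀ B : Set Seq2, MeasurableSet B → ν (shiftZ (-1) ⁻¹' B) = ν B := by
        intro B hB
        have hcomp2 : shift ⁻¹' (shiftZ (-1) ⁻¹' B) = B := by
          ext ξ
          simp only [mem_preimage]
          rw [show shiftZ (-1) (shift ξ) = shiftZ (0:ℤ) ξ from shiftZ_shift (-1) ξ, shiftZ_zero]
        have := measure_preimage_shift hmap ((hB.preimage (measurable_shiftZ (-1))))
        rw [hcomp2] at this
        exact this.symm
      rw [hcomp, hm1 _ (hA.preimage (measurable_shiftZ (-k))), ih]

lemma zeroSeq_null (hmap : ν.map shift = ν) (herg : Ergodic shift ν)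
    (hp : ν {ξ : Seq2 | ξ 0 = 1} ≠ 0) : ν {zeroSeq} = 0 := by
  have hmeas : MeasurableSet ({zeroSeq} : Set Seq2) := measurableSet_singleton _
  have hinv : shift ⁻¹' ({zeroSeq} : Set Seq2) = {zeroSeq} := by
    ext ξ
    simp only [mem_preimage, mem_singleton_iff]
    constructor
    · intro h
      funext m
      have := congrFun h (m - 1)
      simpa [shift, zeroSeq] using this
    · intro h
      rw [h]
      funext m
      rfl
  rcases herg.toPreErgodic.prob_eq_zero_or_one hmeas hinv with h | h
  · exact h
  · exfalso
    apply hp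
    have hcompl : ν ({zeroSeq}ᶜ : Set Seq2) = 0 := by
      rw [measure_compl hmeas (measure_ne_top ν _), h]
      simp
    refine measure_mono_null ?_ hcompl
    intro ξ hξ
    simp only [mem_compl_iff, mem_singleton_iff]
    intro habs
    rw [habs] at hξ
    exact absurd hξ (by decide)

lemma ZeroFut_null (hmap : ν.map shift = ν) (herg : Ergodic shift ν)
    (hp : ν {ξ : Seq2 | ξ 0 = 1} ≠ 0) : ν ZeroFut = 0 := by
  set V : ℕ → Set Seq2 := fun k => shiftZ (-(k:ℤ)) ⁻¹' ZeroFut with hV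
  have hVmeas : ∀ k, MeasurableSet (V k) := fun k =>
    measurableSet_ZeroFut.preimage (measurable_shiftZ _)
  have hVval : ∀ k, ν (V k) = ν ZeroFut := fun k =>
    measure_preimage_shiftZ hmap _ measurableSet_ZeroFut
  have hVanti : Antitone V := by
    refine antitone_nat_of_succ_le (fun k ξ hξ => ?_)
    intro j
    have := hξ (j+1)
    show ξ ((j:ℤ) + -(k:ℤ)) = 0
    have heq : ((j+1:ℕ):ℤ) + -((k+1:ℕ):ℤ) = (j:ℤ) + -(k:ℤ) := by push_cast; ring
    calc ξ ((j:ℤ) + -(k:ℤ)) = ξ (((j+1:ℕ):ℤ) + -((k+1:ℕ):ℤ)) := by rw [heq]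
      _ = 0 := this
  have hVinter : ⋂ k, V k = {zeroSeq} := by
    ext ξ
    simp only [mem_iInter, mem_singleton_iff]
    constructor
    · intro h
      funext m
      have hk : ∃ k : ℕ, -(k:ℤ) ≤ m := ⟨m.natAbs, by omega⟩
      obtain ⟨k, hk⟩ := hk
      have hj : ∃ j : ℕ, (j:ℤ) = m + k := ⟨(m+k).toNat, by omega⟩
      obtain ⟨j, hj⟩ := hj
      have := h k j
      show ξ m = 0
      rw [show (m:ℤ) = (j:ℤ) + -(k:ℤ) by omega]
      exact this
    · intro h j
      rw [h]
      exact fun j' => rfl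
  have hlim := tendsto_measure_iInter_atTop (μ := ν) (s := V)
    (fun k => (hVmeas k).nullMeasurableSet) hVanti ⟨0, measure_ne_top ν _⟩
  rw [hVinter] at hlim
  have hconst : (ν ∘ V) = fun _ => ν ZeroFut := funext fun k => hVval k
  rw [hconst] at hlim
  have := tendsto_nhds_unique hlim tendsto_const_nhds
  rw [← this]
  exact zeroSeq_null hmap herg hp

lemma ZeroPast_null (hmap : ν.map shift = ν) (herg : Ergodic shift ν)
    (hp : ν {ξ : Seq2 | ξ 0 = 1} ≠ 0) : ν ZeroPast = 0 := by
  set V : ℕ → Set Seq2 := fun k => shiftZ (k:ℤ) ⁻¹' ZeroPast with hV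
  have hVmeas : ∀ k, MeasurableSet (V k) := fun k =>
    measurableSet_ZeroPast.preimage (measurable_shiftZ _)
  have hVval : ∀ k, ν (V k) = ν ZeroPast := fun k =>
    measure_preimage_shiftZ hmap _ measurableSet_ZeroPast
  have hVanti : Antitone V := by
    refine antitone_nat_of_succ_le (fun k ξ hξ => ?_)
    intro j
    have := hξ (j+1)
    show ξ (-(j:ℤ) - 1 + (k:ℤ)) = 0
    have heq : -((j+1:ℕ):ℤ) - 1 + ((k+1:ℕ):ℤ) = -(j:ℤ) - 1 + (k:ℤ) := by push_cast; ring
    calc ξ (-(j:ℤ) - 1 + (k:ℤ)) = ξ (-((j+1:ℕ):ℤ) - 1 + ((k+1:ℕ):ℤ)) := by rw [heq]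
      _ = 0 := this
  have hVinter : ⋂ k, V k = {zeroSeq} := by
    ext ξ
    simp only [mem_iInter, mem_singleton_iff]
    constructor
    · intro h
      funext m
      have hk : ∃ k : ℕ, m ≤ (k:ℤ) - 1 := ⟨(m+1).toNat, by omega⟩
      obtain ⟨k, hk⟩ := hk
      have hj : ∃ j : ℕ, -(j:ℤ) - 1 + k = m := ⟨((k:ℤ) - 1 - m).toNat, by omega⟩
      obtain ⟨j, hj⟩ := hj
      have := h k j
      show ξ m = 0
      rw [← hj]
      exact this
    · intro h j
      rw [h]
      exact fun j' => rfl
  have hlim := tendsto_measure_iInter_atTop (μ := ν) (s := V)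
    (fun k => (hVmeas k).nullMeasurableSet) hVanti ⟨0, measure_ne_top ν _⟩
  rw [hVinter] at hlim
  have hconst : (ν ∘ V) = fun _ => ν ZeroPast := funext fun k => hVval k
  rw [hconst] at hlim
  have := tendsto_nhds_unique hlim tendsto_const_nhds
  rw [← this]
  exact zeroSeq_null hmap herg hp

lemma ae_zeroSeq (hmap : ν.map shift = ν) (hp : ν {ξ : Seq2 | ξ 0 = 1} = 0) :
    ∀ᵐ ξ ∂ν, ξ = zeroSeq := by
  have hsub : {ξ : Seq2 | ξ ≠ zeroSeq} ⊆ ⋃ i : ℤ, {ξ : Seq2 | ξ i = 1} := by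
    intro ξ hξ
    simp only [mem_setOf_eq] at hξ
    have : ∃ i : ℤ, ξ i ≠ 0 := by
      by_contra habs
      push_neg at habs
      exact hξ (funext habs)
    obtain ⟨i, hi⟩ := this
    rcases fin2_cases (ξ i) with h | h
    · exact absurd h hi
    · exact mem_iUnion.mpr ⟨i, h⟩
  have hnull : ν (⋃ i : ℤ, {ξ : Seq2 | ξ i = 1}) = 0 := by
    refine measure_iUnion_null (fun i => ?_)
    have hpre : shiftZ i ⁻¹' {ξ : Seq2 | ξ 0 = 1} = {ξ : Seq2 | ξ i = 1} := by
      ext ξ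
      show ξ (0 + i) = 1 ↔ ξ i = 1
      rw [zero_add]
    rw [← hpre, measure_preimage_shiftZ hmap i (measurableSet_coord 0 1)]
    exact hp
  have : ν {ξ : Seq2 | ξ ≠ zeroSeq} = 0 := measure_mono_null hsub hnull
  exact this

end Null

/-! ## graph measures -/

section Graph
variable {f0 f1 df0 df1 : ℝ → ℝ} {d : ℝ} {ν : Measure Seq2} [IsProbabilityMeasure ν]

lemma measurableSet_sym0 : MeasurableSet {p : Seq2 × ℝ | p.1 0 = 0} := by
  have h : {p : Seq2 × ℝ | p.1 0 = 0} = (fun p : Seq2 × ℝ => p.1 0) ⁻¹' {0} := rfl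
  rw [h]
  exact ((measurable_pi_apply (0:ℤ)).comp measurable_fst) (measurableSet_singleton 0)

lemma measurable_F (h1 : H1 f0 f1 df0 df1 d) : Measurable (F f0 f1) := by
  unfold F
  refine Measurable.prodMk (measurable_shift.comp measurable_fst) ?_
  exact Measurable.ite measurableSet_sym0 ((cont0 h1).measurable.comp measurable_snd)
    ((cont1 h1).measurable.comp measurable_snd)

lemma measurable_lyap_integrand (h1 : H1 f0 f1 df0 df1 d) :
    Measurable (fun p : Seq2 × ℝ => Real.log ((if p.1 0 = 0 then df0 else df1) p.2)) := by
  have heq : (fun p : Seq2 × ℝ => Real.log ((if p.1 0 = 0 then df0 else df1) p.2))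
      = fun p : Seq2 × ℝ => Real.log (if p.1 0 = 0 then df0 p.2 else df1 p.2) := by
    funext p
    rw [apply_ite (fun h : ℝ → ℝ => h p.2)]
  rw [heq]
  exact Real.measurable_log.comp (Measurable.ite measurableSet_sym0
    ((measurable_df0 h1).comp measurable_snd) ((measurable_df1 h1).comp measurable_snd))

lemma ae_SetG (hsig : ν (SigmaA f0 f1 d) = 1) : ∀ᵐ ξ ∂ν, ξ ∈ SetG f0 f1 d := by
  have h1' : (1:ℝ≥0∞) ≤ ν (SetG f0 f1 d) := by
    rw [← hsig]
    exact measure_mono SigmaA_subset_SetG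
  have h2' : ν (SetG f0 f1 d) = 1 := le_antisymm prob_le_one h1'
  have h3' : ν (SetG f0 f1 d)ᶜ = 0 := by
    rw [measure_compl measurableSet_SetG (measure_ne_top ν _), h2']
    simp
  rw [ae_iff]
  exact h3'

/-- The graph measure of an equivariant measurable section is an ergodic invariant
measure on `Γ` projecting to `ν`. -/
lemma graph_measure_spec (h1 : H1 f0 f1 df0 df1 d)
    (hsig : ν (SigmaA f0 f1 d) = 1) (hmap : ν.map shift = ν) (herg : Ergodic shift ν)
    (g : Seq2 → ℝ) (hg : Measurable g)
    (heqv : ∀ ξ ∈ SetG f0 f1 d, (if ξ 0 = 0 then f0 else f1) (g ξ) = g (shift ξ))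
    (hmem : ∀ ξ ∈ SetG f0 f1 d, (ξ, g ξ) ∈ Gamma f0 f1 d) :
    IsErgGamma f0 f1 d (ν.map (fun ξ => (ξ, g ξ))) ∧
    (ν.map (fun ξ => (ξ, g ξ))).map Prod.fst = ν ∧
    lyap df0 df1 (ν.map (fun ξ => (ξ, g ξ)))
      = ∫ ξ, Real.log ((if ξ 0 = 0 then df0 else df1) (g ξ)) ∂ν := by
  set G : Seq2 → Seq2 × ℝ := fun ξ => (ξ, g ξ) with hGdef
  have hGmeas : Measurable G := measurable_id.prodMk hg
  have hFmeas : Measurable (F f0 f1) := measurable_F h1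
  have haeG := ae_SetG (f0 := f0) (f1 := f1) (d := d) hsig
  have haeeqv : (F f0 f1) ∘ G =ᵐ[ν] G ∘ shift := by
    filter_upwards [haeG] with ξ hξ
    show F f0 f1 (ξ, g ξ) = (shift ξ, g (shift ξ))
    have h2 : (if ξ 0 = 0 then f0 else f1) (g ξ)
        = (if ξ 0 = 0 then f0 (g ξ) else f1 (g ξ)) :=
      apply_ite (fun h : ℝ → ℝ => h (g ξ)) _ f0 f1
    unfold F
    simp only
    rw [← heqv ξ hξ, h2]
  haveI : IsProbabilityMeasure (ν.map G) := Measure.isProbabilityMeasure_map hGmeas.aemeasurable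
  have hmapF : (ν.map G).map (F f0 f1) = ν.map G := by
    rw [Measure.map_map hFmeas hGmeas, Measure.map_congr haeeqv,
      ← Measure.map_map hGmeas measurable_shift, hmap]
  have hproj : (ν.map G).map Prod.fst = ν := by
    rw [Measure.map_map measurable_fst hGmeas]
    have : (Prod.fst ∘ G) = id := rfl
    rw [this, Measure.map_id]
  have hGam : (ν.map G) (Gamma f0 f1 d) = 1 := by
    refine le_antisymm prob_le_one ?_
    have hsub : ∀ᵐ ξ ∂ν, ξ ∈ G ⁻¹' (Gamma f0 f1 d) := by
      filter_upwards [haeG] with ξ hξ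
      exact hmem ξ hξ
    have h2' : ν (G ⁻¹' (Gamma f0 f1 d)) ≥ 1 := by
      have hcompl : ν (G ⁻¹' (Gamma f0 f1 d))ᶜ = 0 := ae_iff.mp hsub
      have := measure_union_le (μ := ν) (G ⁻¹' (Gamma f0 f1 d)) (G ⁻¹' (Gamma f0 f1 d))ᶜ
      rw [union_compl_self, hcompl, add_zero, measure_univ] at this
      exact this
    exact le_trans h2' (Measure.le_map_apply hGmeas.aemeasurable _)
  have hErg : Ergodic (F f0 f1) (ν.map G) := by
    refine ⟨⟨hFmeas, hmapF⟩, ?_⟩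
    refine ⟨fun s hs hinv => ?_⟩
    rw [eventuallyConst_set']
    set t : Set Seq2 := G ⁻¹' s with htdef
    have htmeas : MeasurableSet t := hs.preimage hGmeas
    have htinv : shift ⁻¹' t =ᵐ[ν] t := by
      rw [Filter.eventuallyEq_set]
      filter_upwards [haeG] with ξ hξ
      show G (shift ξ) ∈ s ↔ G ξ ∈ s
      have hGF : G (shift ξ) = F f0 f1 (G ξ) := by
        show (shift ξ, g (shift ξ)) = F f0 f1 (ξ, g ξ)
        have h2 : (if ξ 0 = 0 then f0 else f1) (g ξ)
            = (if ξ 0 = 0 then f0 (g ξ) else f1 (g ξ)) :=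
          apply_ite (fun h : ℝ → ℝ => h (g ξ)) _ f0 f1
        unfold F
        simp only
        rw [← heqv ξ hξ, h2]
      rw [hGF]
      constructor
      · intro hFs
        have : G ξ ∈ (F f0 f1) ⁻¹' s := hFs
        rwa [hinv] at this
      · intro hGs
        have : G ξ ∈ (F f0 f1) ⁻¹' s := by rwa [hinv]
        exact this
    rcases herg.quasiErgodic.ae_empty_or_univ₀ htmeas.nullMeasurableSet htinv with h | h
    · left
      have hts : ν t = 0 := by
        have := measure_congr h
        simpa using this
      have : (ν.map G) s = 0 := by
        rw [Measure.map_apply hGmeas hs]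
        exact hts
      exact ae_eq_empty.mpr this
    · right
      have hts : ν tᶜ = 0 := by
        have h2' := measure_congr h
        rw [measure_univ] at h2'
        rw [measure_compl htmeas (measure_ne_top ν _), h2']
        simp
      have hcs : (ν.map G) sᶜ = 0 := by
        rw [Measure.map_apply hGmeas hs.compl]
        exact hts
      exact ae_eq_univ.mpr hcs
  have hlyap : lyap df0 df1 (ν.map G)
      = ∫ ξ, Real.log ((if ξ 0 = 0 then df0 else df1) (g ξ)) ∂ν := by
    unfold lyap
    rw [integral_map hGmeas.aemeasurable (measurable_lyap_integrand h1).aestronglyMeasurable]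
  exact ⟨⟨⟨inferInstance, hGam, hmapF⟩, hErg⟩, hproj, hlyap⟩

end Graph

/-! ## the Lyapunov estimates -/

section Lyap
variable {f0 f1 df0 df1 : ℝ → ℝ} {d : ℝ} {ν : Measure Seq2} [IsProbabilityMeasure ν]

/-- uniform bound for the log-derivative along admissible points -/
noncomputable def Cb (df0 df1 : ℝ → ℝ) (d : ℝ) : ℝ :=
  max (max |Real.log (df0 0)| |Real.log (df0 1)|) (max |Real.log (df1 d)| |Real.log (df1 1)|)

lemma abs_log_df0_le (h1 : H1 f0 f1 df0 df1 d) (h2 : H2 df0 df1 d) {x : ℝ}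
    (hx : x ∈ Icc (0:ℝ) 1) : |Real.log (df0 x)| ≤ Cb df0 df1 d := by
  have hl : Real.log (df0 1) ≤ Real.log (df0 x) :=
    (Real.log_le_log_iff h1.deriv0_one.1 (df0_pos h1 h2 hx)).mpr (df0_lower h1 h2 hx)
  have hu : Real.log (df0 x) ≤ Real.log (df0 0) :=
    (Real.log_le_log_iff (df0_pos h1 h2 hx) (df0_pos h1 h2 (by norm_num))).mpr
      (df0_upper h1 h2 hx)
  rw [abs_le]
  constructor
  · calc -(Cb df0 df1 d) ≤ -|Real.log (df0 1)| := by
          have : |Real.log (df0 1)| ≤ Cb df0 df1 d :=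
            le_trans (le_max_right _ _) (le_max_left _ _)
          linarith
      _ ≤ Real.log (df0 1) := neg_abs_le _
      _ ≤ Real.log (df0 x) := hl
  · calc Real.log (df0 x) ≤ Real.log (df0 0) := hu
      _ ≤ |Real.log (df0 0)| := le_abs_self _
      _ ≤ Cb df0 df1 d := le_trans (le_max_left _ _) (le_max_left _ _)

lemma abs_log_df1_le (h1 : H1 f0 f1 df0 df1 d) (h2 : H2 df0 df1 d) {x : ℝ}
    (hx : x ∈ Icc d 1) : |Real.log (df1 x)| ≤ Cb df0 df1 d := by
  have hd1 : d ≤ 1 := h1.d_mem.2.le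
  have hl : Real.log (df1 1) ≤ Real.log (df1 x) :=
    (Real.log_le_log_iff h1.deriv1_one (df1_pos h1 h2 hx)).mpr (df1_lower h1 h2 hx)
  have hu : Real.log (df1 x) ≤ Real.log (df1 d) :=
    (Real.log_le_log_iff (df1_pos h1 h2 hx) (df1_pos h1 h2 ⟨le_refl d, hd1⟩)).mpr
      (df1_upper h1 h2 hx)
  rw [abs_le]
  constructor
  · calc -(Cb df0 df1 d) ≤ -|Real.log (df1 1)| := by
          have : |Real.log (df1 1)| ≤ Cb df0 df1 d :=
            le_trans (le_max_right _ _) (le_max_right _ _)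
          linarith
      _ ≤ Real.log (df1 1) := neg_abs_le _
      _ ≤ Real.log (df1 x) := hl
  · calc Real.log (df1 x) ≤ Real.log (df1 d) := hu
      _ ≤ |Real.log (df1 d)| := le_abs_self _
      _ ≤ Cb df0 df1 d := le_trans (le_max_left _ _) (le_max_right _ _)

/-- `F⁺ₙ`: log-derivative along the clamped lower approximations. -/
noncomputable def Fplus (f0 f1 df0 df1 : ℝ → ℝ) (d : ℝ) (n : ℕ) (ξ : Seq2) : ℝ :=
  Real.log (if ξ 0 = 0 then df0 (aN f0 f1 d n ξ) else df1 (max d (aN f0 f1 d n ξ)))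

noncomputable def Gplus (f0 f1 df0 df1 : ℝ → ℝ) (d : ℝ) (n : ℕ) (ξ : Seq2) : ℝ :=
  Real.log (phiP f0 f1 d ξ - aN f0 f1 d n ξ)

noncomputable def Fminus (f0 f1 df0 df1 : ℝ → ℝ) (d : ℝ) (n : ℕ) (ξ : Seq2) : ℝ :=
  Real.log (if ξ 0 = 0 then df0 (max 0 (uN f0 f1 n ξ)) else df1 (max d (max 0 (uN f0 f1 n ξ))))

noncomputable def Gminus (f0 f1 df0 df1 : ℝ → ℝ) (d : ℝ) (n : ℕ) (ξ : Seq2) : ℝ :=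
  Real.log (uN f0 f1 n ξ - uF f0 f1 ξ)

lemma measurable_Fplus (h1 : H1 f0 f1 df0 df1 d) (n : ℕ) :
    Measurable (Fplus f0 f1 df0 df1 d n) := by
  unfold Fplus
  exact Real.measurable_log.comp (Measurable.ite (measurableSet_coord 0 0)
    ((measurable_df0 h1).comp (measurable_aN n))
    ((measurable_df1 h1).comp (measurable_const.max (measurable_aN n))))

lemma measurable_Gplus (h1 : H1 f0 f1 df0 df1 d) (n : ℕ) :
    Measurable (Gplus f0 f1 df0 df1 d n) := by
  unfold Gplus
  exact Real.measurable_log.comp (measurable_phiP.sub (measurable_aN n))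

lemma measurable_Fminus (h1 : H1 f0 f1 df0 df1 d) (n : ℕ) :
    Measurable (Fminus f0 f1 df0 df1 d n) := by
  unfold Fminus
  exact Real.measurable_log.comp (Measurable.ite (measurableSet_coord 0 0)
    ((measurable_df0 h1).comp (measurable_const.max (measurable_uN n)))
    ((measurable_df1 h1).comp (measurable_const.max (measurable_const.max (measurable_uN n)))))

lemma measurable_Gminus (h1 : H1 f0 f1 df0 df1 d) (n : ℕ) :
    Measurable (Gminus f0 f1 df0 df1 d n) := by
  unfold Gminus
  exact Real.measurable_log.comp ((measurable_uN n).sub measurable_uF)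

lemma abs_Fplus_le (h1 : H1 f0 f1 df0 df1 d) (h2 : H2 df0 df1 d) (n : ℕ) (ξ : Seq2) :
    |Fplus f0 f1 df0 df1 d n ξ| ≤ Cb df0 df1 d := by
  unfold Fplus
  have hd1 : d ≤ 1 := h1.d_mem.2.le
  by_cases h : ξ 0 = 0
  · rw [if_pos h]
    exact abs_log_df0_le h1 h2 (aN_mem_Icc n ξ)
  · rw [if_neg h]
    refine abs_log_df1_le h1 h2 ⟨le_max_left _ _, ?_⟩
    exact max_le hd1 (aN_mem_Icc n ξ).2

lemma abs_Fminus_le (h1 : H1 f0 f1 df0 df1 d) (h2 : H2 df0 df1 d) (n : ℕ) (ξ : Seq2) :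
    |Fminus f0 f1 df0 df1 d n ξ| ≤ Cb df0 df1 d := by
  unfold Fminus
  have hd1 : d ≤ 1 := h1.d_mem.2.le
  have hm01 : max 0 (uN f0 f1 n ξ) ∈ Icc (0:ℝ) 1 :=
    ⟨le_max_left _ _, max_le (by norm_num) (uN_le_one h1 n ξ)⟩
  by_cases h : ξ 0 = 0
  · rw [if_pos h]
    exact abs_log_df0_le h1 h2 hm01
  · rw [if_neg h]
    refine abs_log_df1_le h1 h2 ⟨le_max_left _ _, max_le hd1 hm01.2⟩

lemma integrable_of_bounded_meas {h : Seq2 → ℝ} (hm : Measurable h) {C : ℝ}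
    (hb : ∀ ξ, |h ξ| ≤ C) : Integrable h ν :=
  ⟨hm.aestronglyMeasurable, HasFiniteIntegral.of_bounded (C := C)
    (Eventually.of_forall (by simpa [Real.norm_eq_abs] using hb))⟩

/-- pullback of an a.e. property through `shift`. -/
lemma ae_shift_pullback (hmap : ν.map shift = ν) {p : Seq2 → Prop}
    (hp : MeasurableSet {ξ | p ξ}) (h : ∀ᵐ ξ ∂ν, p ξ) : ∀ᵐ ξ ∂ν, p (shift ξ) := by
  rw [ae_iff] at h ⊢
  have hset : {ξ | ¬ p (shift ξ)} = shift ⁻¹' {ξ | ¬ p ξ} := rfl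
  rw [hset]
  have hm : MeasurableSet {ξ | ¬ p ξ} := by
    have : {ξ | ¬ p ξ} = {ξ | p ξ}ᶜ := rfl
    rw [this]
    exact hp.compl
  rw [measure_preimage_shift hmap hm]
  exact h

lemma ae_strictP (h1 : H1 f0 f1 df0 df1 d) (hsig : ν (SigmaA f0 f1 d) = 1)
    (hmap : ν.map shift = ν) (herg : Ergodic shift ν) (hp : ν {ξ : Seq2 | ξ 0 = 1} ≠ 0) :
    ∀ᵐ ξ ∂ν, ∀ n : ℕ, aN f0 f1 d n ξ < phiP f0 f1 d ξ := by
  have haeG := ae_SetG (f0 := f0) (f1 := f1) (d := d) hsig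
  rw [ae_iff]
  refine measure_mono_null (t := (SetG f0 f1 d)ᶜ ∪ ⋃ n : ℕ, shiftZ (n:ℤ) ⁻¹' ZeroFut) ?_ ?_
  · intro ξ hξ
    simp only [mem_setOf_eq, not_forall, not_lt] at hξ
    obtain ⟨n, hn⟩ := hξ
    by_cases hG : ξ ∈ SetG f0 f1 d
    · right
      have heq : aN f0 f1 d n ξ = phiP f0 f1 d ξ :=
        le_antisymm (aN_le_phiP n ξ) hn
      have hz := aN_eq_phiP_imp h1 hG n heq
      refine mem_iUnion.mpr ⟨n, ?_⟩
      show shiftZ (n:ℤ) ξ ∈ ZeroFut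
      exact phiP_zero_future h1 (SetG_mem_SetS (SetG_shiftZ hG _)) hz
    · exact Or.inl hG
  · refine measure_union_null ?_ (measure_iUnion_null fun n => ?_)
    · exact ae_iff.mp haeG
    · rw [measure_preimage_shiftZ hmap _ measurableSet_ZeroFut]
      exact ZeroFut_null hmap herg hp

lemma ae_strictU (h1 : H1 f0 f1 df0 df1 d) (hsig : ν (SigmaA f0 f1 d) = 1)
    (hmap : ν.map shift = ν) (herg : Ergodic shift ν) (hp : ν {ξ : Seq2 | ξ 0 = 1} ≠ 0) :
    ∀ᵐ ξ ∂ν, ∀ n : ℕ, uF f0 f1 ξ < uN f0 f1 n ξ := by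
  have haeG := ae_SetG (f0 := f0) (f1 := f1) (d := d) hsig
  rw [ae_iff]
  refine measure_mono_null (t := (SetG f0 f1 d)ᶜ ∪ ⋃ n : ℕ, shiftZ (-(n:ℤ)) ⁻¹' ZeroPast) ?_ ?_
  · intro ξ hξ
    simp only [mem_setOf_eq, not_forall, not_lt] at hξ
    obtain ⟨n, hn⟩ := hξ
    by_cases hG : ξ ∈ SetG f0 f1 d
    · right
      have hge : uF f0 f1 ξ ≤ uN f0 f1 n ξ := by
        have := uF_le_max (f0 := f0) (f1 := f1) n ξ
        rwa [max_uN_eq h1 hG n] at this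
      have heq : uN f0 f1 n ξ = uF f0 f1 ξ := le_antisymm hn hge
      have hz := uN_eq_uF_imp h1 hG n heq
      refine mem_iUnion.mpr ⟨n, ?_⟩
      show shiftZ (-(n:ℤ)) ξ ∈ ZeroPast
      intro j
      show ξ (-(j:ℤ) - 1 + -(n:ℤ)) = 0
      have hc : (-(j:ℤ) - 1 + -(n:ℤ)) = -(((j+n:ℕ)):ℤ) - 1 := by push_cast; ring
      rw [hc]
      exact hz (j+n) (by omega)
    · exact Or.inl hG
  · refine measure_union_null ?_ (measure_iUnion_null fun n => ?_)
    · exact ae_iff.mp haeG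
    · rw [measure_preimage_shiftZ hmap _ measurableSet_ZeroPast]
      exact ZeroPast_null hmap herg hp

lemma measurableSet_strictP : MeasurableSet {ξ : Seq2 | ∀ m : ℕ, aN f0 f1 d m ξ < phiP f0 f1 d ξ} := by
  have h : {ξ : Seq2 | ∀ m : ℕ, aN f0 f1 d m ξ < phiP f0 f1 d ξ}
      = ⋂ m : ℕ, {ξ | aN f0 f1 d m ξ < phiP f0 f1 d ξ} := by
    ext ξ; simp [mem_iInter]
  rw [h]
  exact MeasurableSet.iInter fun m => measurableSet_lt (measurable_aN m) measurable_phiP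

lemma measurableSet_strictU : MeasurableSet {ξ : Seq2 | ∀ m : ℕ, uF f0 f1 ξ < uN f0 f1 m ξ} := by
  have h : {ξ : Seq2 | ∀ m : ℕ, uF f0 f1 ξ < uN f0 f1 m ξ}
      = ⋂ m : ℕ, {ξ | uF f0 f1 ξ < uN f0 f1 m ξ} := by
    ext ξ; simp [mem_iInter]
  rw [h]
  exact MeasurableSet.iInter fun m => measurableSet_lt measurable_uF (measurable_uN m)

lemma int_Fplus_nonneg (h1 : H1 f0 f1 df0 df1 d) (h2 : H2 df0 df1 d)
    (hsig : ν (SigmaA f0 f1 d) = 1) (hmap : ν.map shift = ν) (herg : Ergodic shift ν)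
    (hp : ν {ξ : Seq2 | ξ 0 = 1} ≠ 0) (n : ℕ) :
    0 ≤ ∫ ξ, Fplus f0 f1 df0 df1 d (n+1) ξ ∂ν := by
  have hmp : MeasurePreserving shift ν ν := herg.toMeasurePreserving
  refine DGRAux.subcoboundary hmp (measurable_Fplus h1 (n+1))
    (integrable_of_bounded_meas (measurable_Fplus h1 (n+1)) (abs_Fplus_le h1 h2 (n+1)))
    (G := Gplus f0 f1 df0 df1 d (n+1)) (measurable_Gplus h1 (n+1)) ?_
  have hstrict := ae_strictP h1 hsig hmap herg hp
  have hstrict' := ae_shift_pullback hmap measurableSet_strictP hstrict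
  filter_upwards [ae_SetG hsig, hstrict, hstrict'] with ξ hG hs hs'
  set a := aN f0 f1 d (n+1) ξ with ha
  set b := phiP f0 f1 d ξ with hb
  have hab : a < b := hs (n+1)
  have hS : ξ ∈ SetS f0 f1 d := SetG_mem_SetS hG
  have hS' : shift ξ ∈ SetS f0 f1 d := SetG_mem_SetS (SetG_shift hG)
  have ha01 : a ∈ Icc (0:ℝ) 1 := aN_mem_Icc _ _
  have hb01 : b ∈ Icc (0:ℝ) 1 := phiP_mem_Icc _
  have hgap_pos : (0:ℝ) < b - a := by linarith
  have hgapσ_pos : (0:ℝ) < phiP f0 f1 d (shift ξ) - aN f0 f1 d (n+1) (shift ξ) := by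
    have := hs' (n+1)
    linarith
  have he1 : phiP f0 f1 d (shift ξ) = (if ξ 0 = 0 then f0 else f1) b :=
    (phiP_equivariant h1 hG).symm
  have he2 : (if ξ 0 = 0 then f0 else f1) a ≤ aN f0 f1 d (n+1) (shift ξ) := by
    rw [← aN_equivariant h1 hS hS' (n+1)]
    by_cases hc : ξ 0 = 0
    · simp only [hc, if_true]
      exact h1.mono0.monotone (aN_mono h1 hS (n+1))
    · simp only [hc, if_false]
      exact h1.mono1.monotone (aN_mono h1 hS (n+1))
  show Gplus f0 f1 df0 df1 d (n+1) (shift ξ) - Gplus f0 f1 df0 df1 d (n+1) ξ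
      ≤ Fplus f0 f1 df0 df1 d (n+1) ξ
  by_cases hc : ξ 0 = 0
  · have hkey : phiP f0 f1 d (shift ξ) - aN f0 f1 d (n+1) (shift ξ) ≤ df0 a * (b - a) := by
      rw [he1]
      simp only [hc, if_true] at he2 ⊢
      have := slope0_le h1 h2 ha01.1 hab hb01.2
      linarith
    have hD_pos : 0 < df0 a := df0_pos h1 h2 ha01
    have hF : Fplus f0 f1 df0 df1 d (n+1) ξ = Real.log (df0 a) := by
      unfold Fplus
      rw [if_pos hc]
    have hlog : Real.log (phiP f0 f1 d (shift ξ) - aN f0 f1 d (n+1) (shift ξ))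
        ≤ Real.log (df0 a) + Real.log (b - a) := by
      rw [← Real.log_mul (ne_of_gt hD_pos) (ne_of_gt hgap_pos)]
      exact (Real.log_le_log_iff hgapσ_pos (mul_pos hD_pos hgap_pos)).mpr hkey
    unfold Gplus
    rw [hF]
    linarith
  · have hc1 : ξ 0 = 1 := by
      rcases fin2_cases (ξ 0) with h | h
      · exact absurd h hc
      · exact h
    have hd_a : d ≤ a := by
      have h11 := (aN_mem h1 (hS 1)).2.1 hc1
      exact le_trans h11 (aN_monotone h1 hS (show 1 ≤ n+1 by omega))
    have hkey : phiP f0 f1 d (shift ξ) - aN f0 f1 d (n+1) (shift ξ) ≤ df1 a * (b - a) := by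
      rw [he1]
      simp only [hc, if_false] at he2 ⊢
      have := slope1_le h1 h2 hd_a hab hb01.2
      linarith
    have hD_pos : 0 < df1 a := df1_pos h1 h2 ⟨hd_a, ha01.2⟩
    have hF : Fplus f0 f1 df0 df1 d (n+1) ξ = Real.log (df1 a) := by
      unfold Fplus
      rw [if_neg hc, max_eq_right hd_a]
    have hlog : Real.log (phiP f0 f1 d (shift ξ) - aN f0 f1 d (n+1) (shift ξ))
        ≤ Real.log (df1 a) + Real.log (b - a) := by
      rw [← Real.log_mul (ne_of_gt hD_pos) (ne_of_gt hgap_pos)]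
      exact (Real.log_le_log_iff hgapσ_pos (mul_pos hD_pos hgap_pos)).mpr hkey
    unfold Gplus
    rw [hF]
    linarith

lemma int_Fminus_nonpos (h1 : H1 f0 f1 df0 df1 d) (h2 : H2 df0 df1 d)
    (hsig : ν (SigmaA f0 f1 d) = 1) (hmap : ν.map shift = ν) (herg : Ergodic shift ν)
    (hp : ν {ξ : Seq2 | ξ 0 = 1} ≠ 0) (n : ℕ) :
    ∫ ξ, Fminus f0 f1 df0 df1 d (n+1) ξ ∂ν ≤ 0 := by
  have hmp : MeasurePreserving shift ν ν := herg.toMeasurePreserving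
  refine DGRAux.supercoboundary hmp (measurable_Fminus h1 (n+1))
    (integrable_of_bounded_meas (measurable_Fminus h1 (n+1)) (abs_Fminus_le h1 h2 (n+1)))
    (G := Gminus f0 f1 df0 df1 d (n+1)) (measurable_Gminus h1 (n+1)) ?_
  have hstrict := ae_strictU h1 hsig hmap herg hp
  have hstrict' := ae_shift_pullback hmap measurableSet_strictU hstrict
  filter_upwards [ae_SetG hsig, hstrict, hstrict'] with ξ hG hs hs'
  set a := uF f0 f1 ξ with ha
  set bn := uN f0 f1 (n+1) ξ with hbn
  have hab : a < bn := hs (n+1)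
  have ha01 : a ∈ Icc (0:ℝ) 1 := uF_mem_Icc h1 ξ
  have hbn1 : bn ≤ 1 := uN_le_one h1 (n+1) ξ
  have hbn0 : (0:ℝ) ≤ bn := le_trans ha01.1 hab.le
  have hgap_pos : (0:ℝ) < bn - a := by linarith
  have hgapσ_pos : (0:ℝ) < uN f0 f1 (n+1) (shift ξ) - uF f0 f1 (shift ξ) := by
    have := hs' (n+1)
    linarith
  have he1 : uF f0 f1 (shift ξ) = (if ξ 0 = 0 then f0 else f1) a :=
    (uF_equivariant h1 hG).symm
  have he2 : (if ξ 0 = 0 then f0 else f1) bn ≤ uN f0 f1 (n+1) (shift ξ) := by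
    rw [← uN_succ_shift (n+1) ξ]
    exact uN_antitone h1 (shift ξ) (show n+1 ≤ n+2 by omega)
  show Fminus f0 f1 df0 df1 d (n+1) ξ
      ≤ Gminus f0 f1 df0 df1 d (n+1) (shift ξ) - Gminus f0 f1 df0 df1 d (n+1) ξ
  by_cases hc : ξ 0 = 0
  · have hkey : df0 bn * (bn - a) ≤ uN f0 f1 (n+1) (shift ξ) - uF f0 f1 (shift ξ) := by
      rw [he1]
      simp only [hc, if_true] at he2 ⊢
      have := slope0_ge h1 h2 ha01.1 hab hbn1
      linarith
    have hD_pos : 0 < df0 bn := df0_pos h1 h2 ⟨hbn0, hbn1⟩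
    have hF : Fminus f0 f1 df0 df1 d (n+1) ξ = Real.log (df0 bn) := by
      unfold Fminus
      rw [if_pos hc, max_eq_right hbn0]
    have hlog : Real.log (df0 bn) + Real.log (bn - a)
        ≤ Real.log (uN f0 f1 (n+1) (shift ξ) - uF f0 f1 (shift ξ)) := by
      rw [← Real.log_mul (ne_of_gt hD_pos) (ne_of_gt hgap_pos)]
      exact (Real.log_le_log_iff (mul_pos hD_pos hgap_pos) hgapσ_pos).mpr hkey
    unfold Gminus
    rw [hF]
    linarith
  · have hc1 : ξ 0 = 1 := by
      rcases fin2_cases (ξ 0) with h | h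
      · exact absurd h hc
      · exact h
    have hd_a : d ≤ a := uF_ge_d h1 hG hc1
    have hd_bn : d ≤ bn := le_trans hd_a hab.le
    have hkey : df1 bn * (bn - a) ≤ uN f0 f1 (n+1) (shift ξ) - uF f0 f1 (shift ξ) := by
      rw [he1]
      simp only [hc, if_false] at he2 ⊢
      have := slope1_ge h1 h2 hd_a hab hbn1
      linarith
    have hD_pos : 0 < df1 bn := df1_pos h1 h2 ⟨hd_bn, hbn1⟩
    have hF : Fminus f0 f1 df0 df1 d (n+1) ξ = Real.log (df1 bn) := by
      unfold Fminus
      rw [if_neg hc, max_eq_right hbn0, max_eq_right hd_bn]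
    have hlog : Real.log (df1 bn) + Real.log (bn - a)
        ≤ Real.log (uN f0 f1 (n+1) (shift ξ) - uF f0 f1 (shift ξ)) := by
      rw [← Real.log_mul (ne_of_gt hD_pos) (ne_of_gt hgap_pos)]
      exact (Real.log_le_log_iff (mul_pos hD_pos hgap_pos) hgapσ_pos).mpr hkey
    unfold Gminus
    rw [hF]
    linarith

noncomputable def LDg (df0 df1 : ℝ → ℝ) (g : Seq2 → ℝ) (ξ : Seq2) : ℝ :=
  Real.log ((if ξ 0 = 0 then df0 else df1) (g ξ))

lemma LDg_eq (df0 df1 : ℝ → ℝ) (g : Seq2 → ℝ) (ξ : Seq2) :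
    LDg df0 df1 g ξ = Real.log (if ξ 0 = 0 then df0 (g ξ) else df1 (g ξ)) := by
  unfold LDg
  rw [apply_ite (fun h : ℝ → ℝ => h (g ξ))]

lemma lyapP_nonneg (h1 : H1 f0 f1 df0 df1 d) (h2 : H2 df0 df1 d)
    (hsig : ν (SigmaA f0 f1 d) = 1) (hmap : ν.map shift = ν) (herg : Ergodic shift ν)
    (hp : ν {ξ : Seq2 | ξ 0 = 1} ≠ 0) :
    0 ≤ ∫ ξ, LDg df0 df1 (phiP f0 f1 d) ξ ∂ν := by
  have hd1 : d ≤ 1 := h1.d_mem.2.le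
  set L : Seq2 → ℝ := fun ξ =>
    Real.log (if ξ 0 = 0 then df0 (phiP f0 f1 d ξ) else df1 (max d (phiP f0 f1 d ξ))) with hLdef
  have hLcongr : ∫ ξ, LDg df0 df1 (phiP f0 f1 d) ξ ∂ν = ∫ ξ, L ξ ∂ν := by
    refine integral_congr_ae ?_
    filter_upwards [ae_SetG hsig] with ξ hG
    rw [LDg_eq]
    by_cases hc : ξ 0 = 0
    · simp only [hLdef, hc, if_true]
    · have hc1 : ξ 0 = 1 := by
        rcases fin2_cases (ξ 0) with h | h
        · exact absurd h hc
        · exact h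
      have hdp : d ≤ phiP f0 f1 d ξ := phiP_ge_d h1 (SetG_mem_SetS hG) hc1
      simp only [hLdef, hc, if_false, max_eq_right hdp]
  rw [hLcongr]
  have htend : Tendsto (fun n => ∫ ξ, Fplus f0 f1 df0 df1 d (n+1) ξ ∂ν) atTop
      (nhds (∫ ξ, L ξ ∂ν)) := by
    refine tendsto_integral_of_dominated_convergence (bound := fun _ => Cb df0 df1 d)
      (fun n => (measurable_Fplus h1 (n+1)).aestronglyMeasurable)
      (integrable_const _)
      (fun n => Eventually.of_forall (fun ξ => by
        simpa [Real.norm_eq_abs] using abs_Fplus_le h1 h2 (n+1) ξ)) ?_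
    filter_upwards [ae_SetG hsig] with ξ hG
    have hS := SetG_mem_SetS hG
    have htd : Tendsto (fun n => aN f0 f1 d (n+1) ξ) atTop (nhds (phiP f0 f1 d ξ)) :=
      (tendsto_aN h1 hS).comp (tendsto_add_atTop_nat 1)
    by_cases hc : ξ 0 = 0
    · have hred : (fun n => Fplus f0 f1 df0 df1 d (n+1) ξ)
          = fun n => Real.log (df0 (aN f0 f1 d (n+1) ξ)) := by
        funext n
        unfold Fplus
        rw [if_pos hc]
      have hredL : L ξ = Real.log (df0 (phiP f0 f1 d ξ)) := by
        simp only [hLdef, hc, if_true]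
      rw [hred, hredL]
      have h01 : Tendsto (fun n => aN f0 f1 d (n+1) ξ) atTop
          (nhdsWithin (phiP f0 f1 d ξ) (Icc 0 1)) :=
        tendsto_nhdsWithin_iff.mpr ⟨htd, Eventually.of_forall (fun n => aN_mem_Icc _ _)⟩
      have h02 : Tendsto (fun n => df0 (aN f0 f1 d (n+1) ξ)) atTop
          (nhds (df0 (phiP f0 f1 d ξ))) :=
        (h1.contDeriv0 _ (phiP_mem_Icc ξ)).tendsto.comp h01
      have hpos : 0 < df0 (phiP f0 f1 d ξ) := df0_pos h1 h2 (phiP_mem_Icc ξ)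
      exact ((Real.continuousAt_log (ne_of_gt hpos)).tendsto).comp h02
    · have hred : (fun n => Fplus f0 f1 df0 df1 d (n+1) ξ)
          = fun n => Real.log (df1 (max d (aN f0 f1 d (n+1) ξ))) := by
        funext n
        unfold Fplus
        rw [if_neg hc]
      have hredL : L ξ = Real.log (df1 (max d (phiP f0 f1 d ξ))) := by
        simp only [hLdef, hc, if_false]
      rw [hred, hredL]
      have htmax : Tendsto (fun n => max d (aN f0 f1 d (n+1) ξ)) atTop
          (nhds (max d (phiP f0 f1 d ξ))) := tendsto_const_nhds.max htd
      have hmem : max d (phiP f0 f1 d ξ) ∈ Icc d 1 :=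
        ⟨le_max_left _ _, max_le hd1 (phiP_mem_Icc ξ).2⟩
      have h01 : Tendsto (fun n => max d (aN f0 f1 d (n+1) ξ)) atTop
          (nhdsWithin (max d (phiP f0 f1 d ξ)) (Icc d 1)) :=
        tendsto_nhdsWithin_iff.mpr ⟨htmax, Eventually.of_forall (fun n =>
          ⟨le_max_left _ _, max_le hd1 (aN_mem_Icc _ _).2⟩)⟩
      have h02 : Tendsto (fun n => df1 (max d (aN f0 f1 d (n+1) ξ))) atTop
          (nhds (df1 (max d (phiP f0 f1 d ξ)))) :=
        (h1.contDeriv1 _ hmem).tendsto.comp h01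
      have hpos : 0 < df1 (max d (phiP f0 f1 d ξ)) := df1_pos h1 h2 hmem
      exact ((Real.continuousAt_log (ne_of_gt hpos)).tendsto).comp h02
  exact ge_of_tendsto' htend (fun n => int_Fplus_nonneg h1 h2 hsig hmap herg hp n)

lemma lyapU_nonpos (h1 : H1 f0 f1 df0 df1 d) (h2 : H2 df0 df1 d)
    (hsig : ν (SigmaA f0 f1 d) = 1) (hmap : ν.map shift = ν) (herg : Ergodic shift ν)
    (hp : ν {ξ : Seq2 | ξ 0 = 1} ≠ 0) :
    ∫ ξ, LDg df0 df1 (uF f0 f1) ξ ∂ν ≤ 0 := by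
  have hd1 : d ≤ 1 := h1.d_mem.2.le
  set L : Seq2 → ℝ := fun ξ =>
    Real.log (if ξ 0 = 0 then df0 (max 0 (uF f0 f1 ξ)) else df1 (max d (max 0 (uF f0 f1 ξ)))) with hLdef
  have hLcongr : ∫ ξ, LDg df0 df1 (uF f0 f1) ξ ∂ν = ∫ ξ, L ξ ∂ν := by
    refine integral_congr_ae ?_
    filter_upwards [ae_SetG hsig] with ξ hG
    rw [LDg_eq]
    have h0u : max 0 (uF f0 f1 ξ) = uF f0 f1 ξ := max_eq_right (uF_mem_Icc h1 ξ).1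
    by_cases hc : ξ 0 = 0
    · simp only [hLdef, hc, if_true, h0u]
    · have hc1 : ξ 0 = 1 := by
        rcases fin2_cases (ξ 0) with h | h
        · exact absurd h hc
        · exact h
      have hdp : d ≤ uF f0 f1 ξ := uF_ge_d h1 hG hc1
      simp only [hLdef, hc, if_false, h0u, max_eq_right hdp]
  rw [hLcongr]
  have htend : Tendsto (fun n => ∫ ξ, Fminus f0 f1 df0 df1 d (n+1) ξ ∂ν) atTop
      (nhds (∫ ξ, L ξ ∂ν)) := by
    refine tendsto_integral_of_dominated_convergence (bound := fun _ => Cb df0 df1 d)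
      (fun n => (measurable_Fminus h1 (n+1)).aestronglyMeasurable)
      (integrable_const _)
      (fun n => Eventually.of_forall (fun ξ => by
        simpa [Real.norm_eq_abs] using abs_Fminus_le h1 h2 (n+1) ξ)) ?_
    filter_upwards [ae_SetG hsig] with ξ hG
    have htd0 : Tendsto (fun n => uN f0 f1 (n+1) ξ) atTop (nhds (uF f0 f1 ξ)) :=
      (tendsto_uN h1 hG).comp (tendsto_add_atTop_nat 1)
    have htd : Tendsto (fun n => max 0 (uN f0 f1 (n+1) ξ)) atTop
        (nhds (max 0 (uF f0 f1 ξ))) := tendsto_const_nhds.max htd0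
    have hmem0 : max 0 (uF f0 f1 ξ) ∈ Icc (0:ℝ) 1 :=
      ⟨le_max_left _ _, max_le (by norm_num) (uF_mem_Icc h1 ξ).2⟩
    by_cases hc : ξ 0 = 0
    · have hred : (fun n => Fminus f0 f1 df0 df1 d (n+1) ξ)
          = fun n => Real.log (df0 (max 0 (uN f0 f1 (n+1) ξ))) := by
        funext n
        unfold Fminus
        rw [if_pos hc]
      have hredL : L ξ = Real.log (df0 (max 0 (uF f0 f1 ξ))) := by
        simp only [hLdef, hc, if_true]
      rw [hred, hredL]
      have h01 : Tendsto (fun n => max 0 (uN f0 f1 (n+1) ξ)) atTop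
          (nhdsWithin (max 0 (uF f0 f1 ξ)) (Icc 0 1)) :=
        tendsto_nhdsWithin_iff.mpr ⟨htd, Eventually.of_forall (fun n =>
          ⟨le_max_left _ _, max_le (by norm_num) (uN_le_one h1 _ _)⟩)⟩
      have h02 : Tendsto (fun n => df0 (max 0 (uN f0 f1 (n+1) ξ))) atTop
          (nhds (df0 (max 0 (uF f0 f1 ξ)))) :=
        (h1.contDeriv0 _ hmem0).tendsto.comp h01
      have hpos : 0 < df0 (max 0 (uF f0 f1 ξ)) := df0_pos h1 h2 hmem0
      exact ((Real.continuousAt_log (ne_of_gt hpos)).tendsto).comp h02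
    · have hred : (fun n => Fminus f0 f1 df0 df1 d (n+1) ξ)
          = fun n => Real.log (df1 (max d (max 0 (uN f0 f1 (n+1) ξ)))) := by
        funext n
        unfold Fminus
        rw [if_neg hc]
      have hredL : L ξ = Real.log (df1 (max d (max 0 (uF f0 f1 ξ)))) := by
        simp only [hLdef, hc, if_false]
      rw [hred, hredL]
      have htmax : Tendsto (fun n => max d (max 0 (uN f0 f1 (n+1) ξ))) atTop
          (nhds (max d (max 0 (uF f0 f1 ξ)))) := tendsto_const_nhds.max htd
      have hmem : max d (max 0 (uF f0 f1 ξ)) ∈ Icc d 1 :=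
        ⟨le_max_left _ _, max_le hd1 hmem0.2⟩
      have h01 : Tendsto (fun n => max d (max 0 (uN f0 f1 (n+1) ξ))) atTop
          (nhdsWithin (max d (max 0 (uF f0 f1 ξ))) (Icc d 1)) :=
        tendsto_nhdsWithin_iff.mpr ⟨htmax, Eventually.of_forall (fun n =>
          ⟨le_max_left _ _, max_le hd1 (max_le (by norm_num) (uN_le_one h1 _ _))⟩)⟩
      have h02 : Tendsto (fun n => df1 (max d (max 0 (uN f0 f1 (n+1) ξ)))) atTop
          (nhds (df1 (max d (max 0 (uF f0 f1 ξ))))) :=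
        (h1.contDeriv1 _ hmem).tendsto.comp h01
      have hpos : 0 < df1 (max d (max 0 (uF f0 f1 ξ))) := df1_pos h1 h2 hmem
      exact ((Real.continuousAt_log (ne_of_gt hpos)).tendsto).comp h02
  exact le_of_tendsto' htend (fun n => int_Fminus_nonpos h1 h2 hsig hmap herg hp n)

/-! ### the degenerate (Dirac) case -/

lemma shift_zeroSeq : shift zeroSeq = zeroSeq := rfl

lemma shiftZ_zeroSeq (k : ℤ) : shiftZ k zeroSeq = zeroSeq := rfl

lemma admN_zeroSeq (h1 : H1 f0 f1 df0 df1 d) (n : ℕ) (x : ℝ) :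
    admN f0 f1 d n zeroSeq x ↔ x ∈ Icc (0:ℝ) 1 := by
  induction n generalizing x with
  | zero => rfl
  | succ n ih =>
      constructor
      · intro h
        exact h.1
      · intro hIcc
        refine ⟨hIcc, fun h => absurd h (by decide), ?_⟩
        show admN f0 f1 d n (shift zeroSeq) ((if zeroSeq 0 = 0 then f0 else f1) x)
        rw [shift_zeroSeq, if_pos (show zeroSeq 0 = 0 from rfl)]
        exact (ih (f0 x)).mpr (h1.maps0 hIcc)

lemma phiP_zeroSeq (h1 : H1 f0 f1 df0 df1 d) : phiP f0 f1 d zeroSeq = 0 := by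
  have haN : ∀ n, aN f0 f1 d n zeroSeq = 0 := by
    intro n
    have hset : setI f0 f1 d n zeroSeq = Icc (0:ℝ) 1 := by
      ext x
      exact admN_zeroSeq h1 n x
    unfold aN
    rw [hset, csInf_Icc zero_le_one]
  unfold phiP
  simp only [haN]
  exact ciSup_const

lemma fIter_one_zeroSeq (h1 : H1 f0 f1 df0 df1 d) (n : ℕ) :
    fIter f0 f1 zeroSeq n 1 = 1 := by
  induction n with
  | zero => rfl
  | succ n ih =>
      show (if zeroSeq (n:ℤ) = 0 then f0 else f1) (fIter f0 f1 zeroSeq n 1) = 1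
      rw [ih, if_pos (show zeroSeq (n:ℤ) = 0 from rfl), f0_one h1]

lemma uF_zeroSeq (h1 : H1 f0 f1 df0 df1 d) : uF f0 f1 zeroSeq = 1 := by
  have huN : ∀ n, uN f0 f1 n zeroSeq = 1 := by
    intro n
    unfold uN
    rw [shiftZ_zeroSeq]
    exact fIter_one_zeroSeq h1 n
  unfold uF
  simp only [huN]
  rw [show max (0:ℝ) 1 = 1 by norm_num]
  exact ciInf_const

lemma lyapP_nonneg_dirac (h1 : H1 f0 f1 df0 df1 d) (hmap : ν.map shift = ν)
    (hp : ν {ξ : Seq2 | ξ 0 = 1} = 0) :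
    0 ≤ ∫ ξ, LDg df0 df1 (phiP f0 f1 d) ξ ∂ν := by
  have hz := ae_zeroSeq hmap hp
  have hcongr : ∫ ξ, LDg df0 df1 (phiP f0 f1 d) ξ ∂ν
      = ∫ (_ : Seq2), Real.log (df0 0) ∂ν := by
    refine integral_congr_ae ?_
    filter_upwards [hz] with ξ hξ
    rw [hξ]
    unfold LDg
    rw [if_pos (show zeroSeq 0 = 0 from rfl), phiP_zeroSeq h1]
  rw [hcongr, integral_const]
  simp only [probReal_univ, one_smul]
  exact (Real.log_pos h1.deriv0_zero).le

lemma lyapU_nonpos_dirac (h1 : H1 f0 f1 df0 df1 d) (hmap : ν.map shift = ν)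
    (hp : ν {ξ : Seq2 | ξ 0 = 1} = 0) :
    ∫ ξ, LDg df0 df1 (uF f0 f1) ξ ∂ν ≤ 0 := by
  have hz := ae_zeroSeq hmap hp
  have hcongr : ∫ ξ, LDg df0 df1 (uF f0 f1) ξ ∂ν
      = ∫ (_ : Seq2), Real.log (df0 1) ∂ν := by
    refine integral_congr_ae ?_
    filter_upwards [hz] with ξ hξ
    rw [hξ]
    unfold LDg
    rw [if_pos (show zeroSeq 0 = 0 from rfl), uF_zeroSeq h1]
  rw [hcongr, integral_const]
  simp only [probReal_univ, one_smul]
  exact Real.log_nonpos h1.deriv0_one.1.le h1.deriv0_one.2.le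

end Lyap

/-! ## Statement 17 -/

theorem statement_17 (f0 f1 df0 df1 : ℝ → ℝ) (d : ℝ) (hH1 : H1 f0 f1 df0 df1 d)
    (hH2 : H2 df0 df1 d) (ν : Measure Seq2) (hν : IsErgSigma f0 f1 d ν) :
    ∃ μ₁ μ₂ : Measure (Seq2 × ℝ),
      IsErgGamma f0 f1 d μ₁ ∧ IsErgGamma f0 f1 d μ₂ ∧
      μ₁.map Prod.fst = ν ∧ μ₂.map Prod.fst = ν ∧
      lyap df0 df1 μ₁ ≤ 0 ∧ 0 ≤ lyap df0 df1 μ₂ := by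
  obtain ⟨⟨hprob, hsig, hmap⟩, herg⟩ := hν
  haveI := hprob
  have hspec₁ := graph_measure_spec (df0 := df0) (df1 := df1) hH1 hsig hmap herg
    (uF f0 f1) measurable_uF
    (fun ξ hG => uF_equivariant hH1 hG)
    (fun ξ hG => ⟨uF_forward hH1 hG, uF_backward hH1 hG⟩)
  have hspec₂ := graph_measure_spec (df0 := df0) (df1 := df1) hH1 hsig hmap herg
    (phiP f0 f1 d) measurable_phiP
    (fun ξ hG => phiP_equivariant hH1 hG)
    (fun ξ hG => ⟨phiP_forward hH1 hG, phiP_backward hH1 hG⟩)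
  refine ⟨ν.map (fun ξ => (ξ, uF f0 f1 ξ)), ν.map (fun ξ => (ξ, phiP f0 f1 d ξ)),
    hspec₁.1, hspec₂.1, hspec₁.2.1, hspec₂.2.1, ?_, ?_⟩
  · rw [hspec₁.2.2]
    have hLD : (fun ξ : Seq2 => Real.log ((if ξ 0 = 0 then df0 else df1) (uF f0 f1 ξ)))
        = LDg df0 df1 (uF f0 f1) := rfl
    show ∫ ξ, Real.log ((if ξ 0 = 0 then df0 else df1) (uF f0 f1 ξ)) ∂ν ≤ 0
    rw [show (∫ ξ, Real.log ((if ξ 0 = 0 then df0 else df1) (uF f0 f1 ξ)) ∂ν)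
        = ∫ ξ, LDg df0 df1 (uF f0 f1) ξ ∂ν from rfl]
    by_cases hp : ν {ξ : Seq2 | ξ 0 = 1} = 0
    · exact lyapU_nonpos_dirac hH1 hmap hp
    · exact lyapU_nonpos hH1 hH2 hsig hmap herg hp
  · rw [hspec₂.2.2]
    rw [show (∫ ξ, Real.log ((if ξ 0 = 0 then df0 else df1) (phiP f0 f1 d ξ)) ∂ν)
        = ∫ ξ, LDg df0 df1 (phiP f0 f1 d) ξ ∂ν from rfl]
    by_cases hp : ν {ξ : Seq2 | ξ 0 = 1} = 0
    · exact lyapP_nonneg_dirac hH1 hmap hp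
    · exact lyapP_nonneg hH1 hH2 hsig hmap herg hp

end DGR
end

section
/- Assume (H1), (H2) and (H2+) with constant M. Let ν be an ergodic σ-invariant Borel probability measure on Σ and let μ₁, μ₂ be ergodic F-invariant Borel probability measures on Γ with π_*μ₁ = ν = π_*μ₂ and μ₁ ≠ μ₂, labeled so that ∫ x dμ₁(ξ,x) < ∫ x dμ₂(ξ,x). Then M⁻¹ ≤ (χ(μ₁) − χ(μ₂)) / (∫ x dμ₂(ξ,x) − ∫ x dμ₁(ξ,x)) ≤ M. -/
open Set MeasureTheory Filter

namespace DGR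

/-! ## Auxiliary material -/

open Topology in
/-- Subsequence pointwise convergence of Birkhoff averages, via the von Neumann
mean ergodic theorem in `L²` plus extraction of an a.e. convergent subsequence. -/
theorem aux_subseq {α : Type*} [MeasurableSpace α] {T : α → α} {μ : Measure α}
    [IsProbabilityMeasure μ] (hT : Ergodic T μ) {g : α → ℝ} (hg : MemLp g 2 μ)
    (ψ : ℕ → ℕ) (hψ : StrictMono ψ) :
    ∃ φ : ℕ → ℕ, StrictMono φ ∧ ∀ᵐ x ∂μ, Tendsto
      (fun j => (ψ (φ j) : ℝ)⁻¹ * ∑ k ∈ Finset.range (ψ (φ j)), g (T^[k] x))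
      atTop (𝓝 (∫ x, g x ∂μ)) := by
  classical
  have hmp : MeasurePreserving T μ μ := hT.toMeasurePreserving
  set G : Lp ℝ 2 μ := hg.toLp g with hGdef
  set U : Lp ℝ 2 μ →L[ℝ] Lp ℝ 2 μ :=
    (Lp.compMeasurePreservingₗᵢ (𝕜 := ℝ) T hmp).toContinuousLinearMap with hUdef
  have hUnorm : ‖U‖ ≤ 1 := LinearIsometry.norm_toContinuousLinearMap_le _
  have hUcoe : ∀ v : Lp ℝ 2 μ, (U v : α → ℝ) =ᵐ[μ] (v : α → ℝ) ∘ T := fun v =>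
    Lp.coeFn_compMeasurePreserving v hmp
  obtain ⟨PG, hPGfix, hconv⟩ : ∃ P : Lp ℝ 2 μ, U P = P ∧
      Tendsto (birkhoffAverage ℝ U _root_.id · G) atTop (𝓝 P) := by
    refine ⟨_, ?_, U.tendsto_birkhoffAverage_orthogonalProjection hUnorm G⟩
    have := (Submodule.orthogonalProjectionOnto (LinearMap.eqLocus (U : Lp ℝ 2 μ →ₗ[ℝ] Lp ℝ 2 μ)
      ((1 : Lp ℝ 2 μ →L[ℝ] Lp ℝ 2 μ) : Lp ℝ 2 μ →ₗ[ℝ] Lp ℝ 2 μ)) G).2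
    rw [LinearMap.mem_eqLocus] at this
    simpa using this
  -- the limit is a.e. constant
  have hinv : ((PG : α → ℝ) ∘ T) =ᵐ[μ] (PG : α → ℝ) := by
    refine ((hUcoe PG).symm.trans ?_)
    rw [hPGfix]
  obtain ⟨c, hc⟩ := hT.ae_eq_const_of_ae_eq_comp_ae (Lp.aestronglyMeasurable PG) hinv
  -- pointwise identification of the Birkhoff averages
  have hiter : ∀ k : ℕ, ((U^[k] G : Lp ℝ 2 μ) : α → ℝ) =ᵐ[μ] g ∘ T^[k] := by
    intro k
    induction k with
    | zero => simpa using hg.coeFn_toLp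
    | succ k ih =>
      rw [Function.iterate_succ_apply']
      refine (hUcoe _).trans ?_
      have h9 : (g ∘ T^[k]) ∘ T = g ∘ T^[k + 1] := by
        rw [Function.comp_assoc, ← Function.iterate_succ]
      exact h9 ▸ hmp.quasiMeasurePreserving.ae_eq_comp ih
  have havg : ∀ N : ℕ, ((birkhoffAverage ℝ U _root_.id N G : Lp ℝ 2 μ) : α → ℝ) =ᵐ[μ]
      fun x => (N : ℝ)⁻¹ * ∑ k ∈ Finset.range N, g (T^[k] x) := by
    intro N
    have hsum : ((birkhoffSum U _root_.id N G : Lp ℝ 2 μ) : α → ℝ) =ᵐ[μ]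
        fun x => ∑ k ∈ Finset.range N, g (T^[k] x) := by
      induction N with
      | zero => simpa [birkhoffSum, Pi.zero_def] using Lp.coeFn_zero (E := ℝ) (p := 2) (μ := μ)
      | succ N ih =>
        have h1 : birkhoffSum U _root_.id (N + 1) G
            = birkhoffSum U _root_.id N G + U^[N] G := birkhoffSum_succ _ _ _ _
        rw [h1]
        filter_upwards [Lp.coeFn_add (birkhoffSum U _root_.id N G) (U^[N] G), ih, hiter N]
          with x h2 h3 h4
        simp only [h2, Pi.add_apply, h3, h4, Function.comp_apply, Finset.sum_range_succ]
    have h5 : birkhoffAverage ℝ U _root_.id N G = (N : ℝ)⁻¹ • birkhoffSum U _root_.id N G := rfl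
    rw [h5]
    filter_upwards [Lp.coeFn_smul ((N : ℝ)⁻¹) (birkhoffSum U _root_.id N G), hsum] with x h6 h7
    simp [h6, h7]
  -- identify the constant with the integral
  have hint : ∀ k : ℕ, ∫ x, g (T^[k] x) ∂μ = ∫ x, g x ∂μ := by
    intro k
    have hmk : Measure.map (T^[k]) μ = μ := (hmp.iterate k).map_eq
    conv_rhs => rw [← hmk]
    rw [integral_map (hmp.iterate k).measurable.aemeasurable]
    rw [hmk]; exact hg.aestronglyMeasurable
  have hgint : Integrable g μ := hg.integrable one_le_two
  have hintavg : ∀ N : ℕ, 1 ≤ N →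
      ∫ x, ((birkhoffAverage ℝ U _root_.id N G : Lp ℝ 2 μ) : α → ℝ) x ∂μ = ∫ x, g x ∂μ := by
    intro N hN
    rw [integral_congr_ae (havg N)]
    have hterm : ∀ k ∈ Finset.range N, Integrable (fun x => g (T^[k] x)) μ :=
      fun k _ => (hg.comp_measurePreserving (hmp.iterate k)).integrable one_le_two
    rw [integral_const_mul, integral_finset_sum _ hterm]
    simp only [hint]
    rw [Finset.sum_const, Finset.card_range, nsmul_eq_mul]
    field_simp
  have h1mem : MemLp (fun _ : α => (1 : ℝ)) 2 μ := memLp_const 1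
  set one : Lp ℝ 2 μ := h1mem.toLp _ with hone
  have hone_coe : (one : α → ℝ) =ᵐ[μ] fun _ => (1 : ℝ) := h1mem.coeFn_toLp
  have hinner : ∀ v : Lp ℝ 2 μ, @inner ℝ _ _ v one = ∫ x, (v : α → ℝ) x ∂μ := by
    intro v
    rw [L2.inner_def]
    refine integral_congr_ae ?_
    filter_upwards [hone_coe] with x hx
    simp [RCLike.inner_apply, starRingEnd_apply, star_trivial, hx]
  have hctend : Tendsto (fun N => @inner ℝ _ _ (birkhoffAverage ℝ U _root_.id N G) one) atTop
      (𝓝 (@inner ℝ _ _ PG one)) := hconv.inner tendsto_const_nhds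
  have hPGint : @inner ℝ _ _ PG one = c := by
    rw [hinner PG, integral_congr_ae hc]
    simp
  have hceq : c = ∫ x, g x ∂μ := by
    have h8 : Tendsto (fun N => @inner ℝ _ _ (birkhoffAverage ℝ U _root_.id N G) one) atTop
        (𝓝 (∫ x, g x ∂μ)) := by
      refine Tendsto.congr' ?_ tendsto_const_nhds
      filter_upwards [eventually_ge_atTop 1] with N hN
      rw [hinner, hintavg N hN]
    rw [← hPGint]
    exact tendsto_nhds_unique hctend h8
  -- convergence in measure and subsequence extraction
  have hTIM : TendstoInMeasure μ
      (fun N => ((birkhoffAverage ℝ U _root_.id N G : Lp ℝ 2 μ) : α → ℝ)) atTop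
      ((PG : α → ℝ)) := tendstoInMeasure_of_tendsto_Lp hconv
  have hTIM2 : TendstoInMeasure μ
      (fun (N : ℕ) (x : α) => (N : ℝ)⁻¹ * ∑ k ∈ Finset.range N, g (T^[k] x)) atTop
      (fun _ => ∫ x, g x ∂μ) := by
    refine TendstoInMeasure.congr (fun i => havg i) ?_ hTIM
    rw [← hceq]; exact hc
  have hTIM3 : TendstoInMeasure μ
      (fun (j : ℕ) (x : α) => (ψ j : ℝ)⁻¹ * ∑ k ∈ Finset.range (ψ j), g (T^[k] x)) atTop
      (fun _ => ∫ x, g x ∂μ) :=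
    fun ε hε => (hTIM2 ε hε).comp hψ.tendsto_atTop
  obtain ⟨ns, hns, hae⟩ := hTIM3.exists_seq_tendsto_ae
  exact ⟨ns, hns, hae⟩

lemma shift_iterate (ξ : Seq2) (k : ℕ) (m : ℤ) : (shift^[k] ξ) m = ξ (m + k) := by
  induction k generalizing ξ m with
  | zero => simp
  | succ k ih =>
    rw [Function.iterate_succ_apply]
    rw [ih (shift ξ) m]
    show ξ (m + k + 1) = ξ (m + (k + 1 : ℕ))
    congr 1
    push_cast
    ring

lemma F_iterate (f0 f1 : ℝ → ℝ) (q : Seq2 × ℝ) (k : ℕ) :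
    (F f0 f1)^[k] q = (shift^[k] q.1, fIter f0 f1 q.1 k q.2) := by
  induction k with
  | zero => rfl
  | succ k ih =>
    rw [Function.iterate_succ_apply', ih]
    show (shift (shift^[k] q.1), _) = (shift^[k+1] q.1, fIter f0 f1 q.1 (k+1) q.2)
    rw [← Function.iterate_succ_apply' shift]
    refine Prod.ext rfl ?_
    show (if (shift^[k] q.1) 0 = 0 then f0 (fIter f0 f1 q.1 k q.2)
        else f1 (fIter f0 f1 q.1 k q.2)) = _
    rw [shift_iterate q.1 k 0, zero_add]
    show _ = (if q.1 (k : ℤ) = 0 then f0 else f1) (fIter f0 f1 q.1 k q.2)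
    split <;> simp

lemma fIter_lt (f0 f1 : ℝ → ℝ) (h0 : StrictMono f0) (h1 : StrictMono f1) (ξ : Seq2)
    (k : ℕ) {a b : ℝ} (hab : a < b) : fIter f0 f1 ξ k a < fIter f0 f1 ξ k b := by
  induction k with
  | zero => exact hab
  | succ k ih =>
    show (if ξ (k : ℤ) = 0 then f0 else f1) _ < (if ξ (k : ℤ) = 0 then f0 else f1) _
    split
    · exact h0 ih
    · exact h1 ih

lemma fin2_eq_one {i : Fin 2} (h : i ≠ 0) : i = 1 := by
  have h1 : i.val < 2 := i.isLt
  have h2 : i.val ≠ 0 := fun hv => h (Fin.ext hv)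
  exact Fin.ext (show i.val = 1 by omega)

/-- Bound on `|log (df x)|` from the (H2+) two-sided Lipschitz estimates on `[a,1]`. -/
lemma log_deriv_bound {df : ℝ → ℝ} {a M : ℝ} (hM : 0 < M) (ha0 : 0 ≤ a) (ha1 : a ≤ 1)
    (hB : ∀ x ∈ Icc a 1, ∀ y ∈ Icc a 1, x < y →
      M⁻¹ * (y - x) ≤ Real.log (df x) - Real.log (df y) ∧
        Real.log (df x) - Real.log (df y) ≤ M * (y - x)) :
    ∀ x ∈ Icc a 1, |Real.log (df x)| ≤ M + |Real.log (df 1)| := by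
  intro x hx
  rcases eq_or_lt_of_le hx.2 with h1 | h1
  · rw [h1]
    have : (0:ℝ) ≤ M := hM.le
    nlinarith [abs_nonneg (Real.log (df 1))]
  · have h2 := hB x hx 1 ⟨ha1, le_refl 1⟩ h1
    have h3 : (0:ℝ) ≤ M⁻¹ * (1 - x) := by
      have := inv_pos.2 hM
      nlinarith
    have hx0 : 0 ≤ x := le_trans ha0 hx.1
    have h4 : M * (1 - x) ≤ M := by nlinarith [mul_nonneg hM.le hx0]
    rw [abs_le]
    constructor
    · nlinarith [neg_abs_le (Real.log (df 1))]
    · nlinarith [le_abs_self (Real.log (df 1))]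

open scoped ENNReal in
/-- A.e. slices of a measurable set of full measure are full for a Markov kernel
disintegration. -/
lemma ae_slice_full {β : Type*} [MeasurableSpace β] (ν : Measure β) [IsProbabilityMeasure ν]
    {κ : ProbabilityTheory.Kernel β ℝ} [ProbabilityTheory.IsMarkovKernel κ]
    {G : Set (β × ℝ)} (hG : MeasurableSet G) (hfull : (ν.compProd κ) G = 1) :
    ∀ᵐ ξ ∂ν, (κ ξ) (Prod.mk ξ ⁻¹' G) = 1 := by
  rw [Measure.compProd_apply hG] at hfull
  have hmeas : Measurable fun ξ => (κ ξ) (Prod.mk ξ ⁻¹' G) :=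
    ProbabilityTheory.Kernel.measurable_kernel_prodMk_left hG
  have hle : ∀ ξ, (κ ξ) (Prod.mk ξ ⁻¹' G) ≤ 1 := fun ξ => prob_le_one
  have h0 : ∫⁻ ξ, (1 - (κ ξ) (Prod.mk ξ ⁻¹' G)) ∂ν = 0 := by
    rw [lintegral_sub hmeas (by rw [hfull]; exact ENNReal.one_ne_top) (ae_of_all _ hle)]
    rw [hfull, lintegral_one, measure_univ]
    simp
  have h1 := (lintegral_eq_zero_iff (measurable_const.sub hmeas)).1 h0
  filter_upwards [h1] with ξ hb
  exact le_antisymm (hle ξ) (tsub_eq_zero_iff_le.1 hb)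

/-- The safe region: fiber coordinate in `[0,1]`, and at least `d` when the symbol is `1`. -/
def Sset (d : ℝ) : Set (Seq2 × ℝ) :=
  {p : Seq2 × ℝ | p.2 ∈ Icc (0:ℝ) 1 ∧ (p.1 0 = 1 → d ≤ p.2)}

open Topology in
/-- Per-measure package: a subsequence along which, almost surely, the Birkhoff averages of
the fiber log-derivative and of the fiber coordinate converge to their integrals, and the
whole forward orbit stays in the safe region. -/
lemma ae_good (f0 f1 df0 df1 : ℝ → ℝ) (d M : ℝ) (hH1 : H1 f0 f1 df0 df1 d)
    (hH2p : H2plus df0 df1 d M) (μ : Measure (Seq2 × ℝ)) (hμ : IsErgGamma f0 f1 d μ)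
    (ψ : ℕ → ℕ) (hψ : StrictMono ψ) :
    ∃ φ : ℕ → ℕ, StrictMono φ ∧ ∀ᵐ p ∂μ,
      (Tendsto (fun j => (ψ (φ j) : ℝ)⁻¹ * ∑ k ∈ Finset.range (ψ (φ j)),
          Real.log ((if ((F f0 f1)^[k] p).1 0 = 0 then df0 else df1) ((F f0 f1)^[k] p).2))
        atTop (𝓝 (lyap df0 df1 μ))) ∧
      (Tendsto (fun j => (ψ (φ j) : ℝ)⁻¹ * ∑ k ∈ Finset.range (ψ (φ j)), ((F f0 f1)^[k] p).2)
        atTop (𝓝 (∫ p, p.2 ∂μ))) ∧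
      ∀ k : ℕ, (F f0 f1)^[k] p ∈ Sset d := by
  classical
  haveI : IsProbabilityMeasure μ := hμ.1.1
  have hT : Ergodic (F f0 f1) μ := hμ.2
  obtain ⟨hM1, hB0, hB1⟩ := hH2p
  have hM0 : (0:ℝ) < M := lt_trans one_pos hM1
  have hd0 : (0:ℝ) < d := hH1.d_mem.1
  have hd1 : d < 1 := hH1.d_mem.2
  set glog : Seq2 × ℝ → ℝ := fun p => Real.log ((if p.1 0 = 0 then df0 else df1) p.2)
    with hglog
  -- measurability
  have hdf0m : Measurable df0 := by
    have heq : df0 = deriv f0 := funext fun x => ((hH1.hasDeriv0 x).deriv).symm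
    rw [heq]; exact measurable_deriv _
  have hdf1m : Measurable df1 := by
    have heq : df1 = deriv f1 := funext fun x => ((hH1.hasDeriv1 x).deriv).symm
    rw [heq]; exact measurable_deriv _
  have hcoord : Measurable fun p : Seq2 × ℝ => p.1 0 :=
    (measurable_pi_apply (0:ℤ)).comp measurable_fst
  have hset0 : MeasurableSet {p : Seq2 × ℝ | p.1 0 = 0} := hcoord (measurableSet_singleton 0)
  have hgm : Measurable glog := by
    have hge : glog = fun p : Seq2 × ℝ =>
        if p.1 0 = 0 then Real.log (df0 p.2) else Real.log (df1 p.2) := by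
      funext p; rw [hglog]; by_cases hc : p.1 0 = 0 <;> simp [hc]
    rw [hge]
    exact Measurable.ite hset0 (Real.measurable_log.comp (hdf0m.comp measurable_snd))
      (Real.measurable_log.comp (hdf1m.comp measurable_snd))
  -- the safe region
  have hSm : MeasurableSet (Sset d) := by
    have h2 : MeasurableSet {p : Seq2 × ℝ | p.1 0 = 1} := hcoord (measurableSet_singleton 1)
    have h3 : MeasurableSet {p : Seq2 × ℝ | p.2 ∈ Icc (0:ℝ) 1} := measurable_snd measurableSet_Icc
    have h4 : MeasurableSet {p : Seq2 × ℝ | d ≤ p.2} := measurable_snd measurableSet_Ici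
    have hrw : Sset d = {p : Seq2 × ℝ | p.2 ∈ Icc (0:ℝ) 1} ∩
        ({p : Seq2 × ℝ | p.1 0 = 1}ᶜ ∪ {p : Seq2 × ℝ | d ≤ p.2}) := by
      ext p
      simp only [Sset, mem_setOf_eq, mem_inter_iff, mem_union, mem_compl_iff, imp_iff_not_or]
    rw [hrw]; exact h3.inter (h2.compl.union h4)
  have hGamS : Gamma f0 f1 d ⊆ Sset d := by
    rintro ⟨ξ, x⟩ ⟨hfwd, _⟩
    have h0 := hfwd 0
    refine ⟨h0.1, fun h1 => h0.2 ?_⟩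
    simpa using h1
  have hS1 : μ (Sset d) = 1 :=
    le_antisymm prob_le_one (le_trans (le_of_eq hμ.1.2.1.symm) (measure_mono hGamS))
  have hSae : ∀ᵐ p ∂μ, p ∈ Sset d := by
    have hc : μ (Sset d)ᶜ = 0 := by
      rw [measure_compl hSm (measure_ne_top _ _), hS1, measure_univ]; simp
    exact mem_ae_iff.mpr hc
  -- boundedness
  set C : ℝ := M + |Real.log (df0 1)| + |Real.log (df1 1)| with hC
  have hgb : ∀ᵐ p ∂μ, ‖glog p‖ ≤ C := by
    filter_upwards [hSae] with p hp
    rw [Real.norm_eq_abs]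
    by_cases hc0 : p.1 0 = 0
    · have he : glog p = Real.log (df0 p.2) := by rw [hglog]; simp [hc0]
      rw [he]
      have := log_deriv_bound hM0 le_rfl zero_le_one hB0 p.2 hp.1
      have h5 := abs_nonneg (Real.log (df1 1))
      rw [hC]; linarith
    · have hc1 : p.1 0 = 1 := fin2_eq_one hc0
      have he : glog p = Real.log (df1 p.2) := by rw [hglog]; simp [hc0]
      rw [he]
      have hmem : p.2 ∈ Icc d 1 := ⟨hp.2 hc1, hp.1.2⟩
      have := log_deriv_bound hM0 hd0.le hd1.le hB1 p.2 hmem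
      have h5 := abs_nonneg (Real.log (df0 1))
      rw [hC]; linarith
  have hgmem : MemLp glog 2 μ := MemLp.of_bound hgm.aestronglyMeasurable C hgb
  have hhb : ∀ᵐ p ∂μ, ‖(fun q : Seq2 × ℝ => q.2) p‖ ≤ 1 := by
    filter_upwards [hSae] with p hp
    rw [Real.norm_eq_abs, abs_le]
    exact ⟨by linarith [hp.1.1], hp.1.2⟩
  have hhmem : MemLp (fun q : Seq2 × ℝ => q.2) 2 μ :=
    MemLp.of_bound measurable_snd.aestronglyMeasurable 1 hhb
  -- the orbit a.e. stays in the safe region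
  have horb : ∀ᵐ p ∂μ, ∀ k : ℕ, (F f0 f1)^[k] p ∈ Sset d := by
    rw [ae_all_iff]
    intro k
    have hmk : Measure.map ((F f0 f1)^[k]) μ = μ := (hT.toMeasurePreserving.iterate k).map_eq
    exact (ae_map_iff (hT.toMeasurePreserving.iterate k).measurable.aemeasurable hSm).1
      (by rw [hmk]; exact hSae)
  -- subsequences
  obtain ⟨φ1, hφ1, hae1⟩ := aux_subseq hT hgmem ψ hψ
  obtain ⟨φ2, hφ2, hae2⟩ := aux_subseq hT hhmem (ψ ∘ φ1) (hψ.comp hφ1)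
  refine ⟨φ1 ∘ φ2, hφ1.comp hφ2, ?_⟩
  filter_upwards [hae1, hae2, horb] with p h1 h2 h3
  have h1' := h1.comp hφ2.tendsto_atTop
  exact ⟨h1', h2, h3⟩

/-! ## Statement 18 -/

theorem statement_18 (f0 f1 df0 df1 : ℝ → ℝ) (d M : ℝ) (hH1 : H1 f0 f1 df0 df1 d)
    (hH2 : H2 df0 df1 d) (hH2p : H2plus df0 df1 d M)
    (ν : Measure Seq2) (hν : IsErgSigma f0 f1 d ν)
    (μ₁ μ₂ : Measure (Seq2 × ℝ))
    (hμ₁ : IsErgGamma f0 f1 d μ₁) (hμ₂ : IsErgGamma f0 f1 d μ₂)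
    (hp₁ : μ₁.map Prod.fst = ν) (hp₂ : μ₂.map Prod.fst = ν)
    (hne : μ₁ ≠ μ₂) (hord : (∫ p, p.2 ∂μ₁) < ∫ p, p.2 ∂μ₂) :
    M⁻¹ ≤ (lyap df0 df1 μ₁ - lyap df0 df1 μ₂) / ((∫ p, p.2 ∂μ₂) - ∫ p, p.2 ∂μ₁) ∧
    (lyap df0 df1 μ₁ - lyap df0 df1 μ₂) / ((∫ p, p.2 ∂μ₂) - ∫ p, p.2 ∂μ₁) ≤ M := by
  classical
  obtain ⟨hM1, hB0, hB1⟩ := hH2p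
  have hM0 : (0:ℝ) < M := lt_trans one_pos hM1
  haveI hPν : IsProbabilityMeasure ν := hν.1.1
  haveI hP1 : IsProbabilityMeasure μ₁ := hμ₁.1.1
  haveI hP2 : IsProbabilityMeasure μ₂ := hμ₂.1.1
  obtain ⟨φA, hφA, haeA⟩ :=
    ae_good f0 f1 df0 df1 d M hH1 ⟨hM1, hB0, hB1⟩ μ₁ hμ₁ id strictMono_id
  obtain ⟨φB, hφB, haeB⟩ :=
    ae_good f0 f1 df0 df1 d M hH1 ⟨hM1, hB0, hB1⟩ μ₂ hμ₂ φA hφA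
  set n : ℕ → ℕ := fun j => φA (φB j) with hn
  -- upgrade the `μ₁` statement to the final subsequence
  have haeA' : ∀ᵐ p ∂μ₁,
      (Tendsto (fun j => (n j : ℝ)⁻¹ * ∑ k ∈ Finset.range (n j),
          Real.log ((if ((F f0 f1)^[k] p).1 0 = 0 then df0 else df1) ((F f0 f1)^[k] p).2))
        atTop (nhds (lyap df0 df1 μ₁))) ∧
      (Tendsto (fun j => (n j : ℝ)⁻¹ * ∑ k ∈ Finset.range (n j), ((F f0 f1)^[k] p).2)
        atTop (nhds (∫ p, p.2 ∂μ₁))) ∧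
      ∀ k : ℕ, (F f0 f1)^[k] p ∈ Sset d := by
    filter_upwards [haeA] with p hp
    have h1 := hp.1.comp hφB.tendsto_atTop
    have h2 := hp.2.1.comp hφB.tendsto_atTop
    exact ⟨h1, h2, hp.2.2⟩
  have haeB' : ∀ᵐ p ∂μ₂,
      (Tendsto (fun j => (n j : ℝ)⁻¹ * ∑ k ∈ Finset.range (n j),
          Real.log ((if ((F f0 f1)^[k] p).1 0 = 0 then df0 else df1) ((F f0 f1)^[k] p).2))
        atTop (nhds (lyap df0 df1 μ₂))) ∧
      (Tendsto (fun j => (n j : ℝ)⁻¹ * ∑ k ∈ Finset.range (n j), ((F f0 f1)^[k] p).2)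
        atTop (nhds (∫ p, p.2 ∂μ₂))) ∧
      ∀ k : ℕ, (F f0 f1)^[k] p ∈ Sset d := haeB
  -- measurable full sets
  obtain ⟨t₁, ht₁sub, ht₁m, ht₁0⟩ := exists_measurable_superset_of_null (ae_iff.mp haeA')
  obtain ⟨t₂, ht₂sub, ht₂m, ht₂0⟩ := exists_measurable_superset_of_null (ae_iff.mp haeB')
  have hG₁1 : μ₁ t₁ᶜ = 1 := by
    rw [measure_compl ht₁m (measure_ne_top _ _), ht₁0, measure_univ]; simp
  have hG₂1 : μ₂ t₂ᶜ = 1 := by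
    rw [measure_compl ht₂m (measure_ne_top _ _), ht₂0, measure_univ]; simp
  have hG₁prop := fun (p : Seq2 × ℝ) (hp : p ∈ t₁ᶜ) =>
    not_not.mp (fun hnp => hp (ht₁sub hnp))
  have hG₂prop := fun (p : Seq2 × ℝ) (hp : p ∈ t₂ᶜ) =>
    not_not.mp (fun hnp => hp (ht₂sub hnp))
  -- disintegration: find a common base point
  have hdis₁ : ν.compProd μ₁.condKernel = μ₁ := by
    have h9 := μ₁.disintegrate μ₁.condKernel
    have h10 : μ₁.fst = ν := by unfold Measure.fst; exact hp₁
    rwa [h10] at h9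
  have hdis₂ : ν.compProd μ₂.condKernel = μ₂ := by
    have h9 := μ₂.disintegrate μ₂.condKernel
    have h10 : μ₂.fst = ν := by unfold Measure.fst; exact hp₂
    rwa [h10] at h9
  have hsl₁ := ae_slice_full ν ht₁m.compl (by rw [hdis₁]; exact hG₁1)
  have hsl₂ := ae_slice_full ν ht₂m.compl (by rw [hdis₂]; exact hG₂1)
  have hν0 : ν ≠ 0 := by
    intro h0
    have h00 := measure_univ (μ := ν)
    rw [h0] at h00
    simp at h00
  haveI : (MeasureTheory.ae ν).NeBot := ae_neBot.2 hν0
  obtain ⟨ξ, hξ₁, hξ₂⟩ := (hsl₁.and hsl₂).exists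
  have hne₁ : (Prod.mk ξ ⁻¹' t₁ᶜ).Nonempty := by
    rw [nonempty_iff_ne_empty]
    intro he
    rw [he] at hξ₁
    simp at hξ₁
  have hne₂ : (Prod.mk ξ ⁻¹' t₂ᶜ).Nonempty := by
    rw [nonempty_iff_ne_empty]
    intro he
    rw [he] at hξ₂
    simp at hξ₂
  obtain ⟨x₁, hx₁⟩ := hne₁
  obtain ⟨x₂, hx₂⟩ := hne₂
  obtain ⟨t1g, t1h, orb1⟩ := hG₁prop (ξ, x₁) hx₁
  obtain ⟨t2g, t2h, orb2⟩ := hG₂prop (ξ, x₂) hx₂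
  -- iterate formulas and safe-region facts
  have hit1 : ∀ k : ℕ, (F f0 f1)^[k] (ξ, x₁) = (shift^[k] ξ, fIter f0 f1 ξ k x₁) :=
    fun k => F_iterate f0 f1 (ξ, x₁) k
  have hit2 : ∀ k : ℕ, (F f0 f1)^[k] (ξ, x₂) = (shift^[k] ξ, fIter f0 f1 ξ k x₂) :=
    fun k => F_iterate f0 f1 (ξ, x₂) k
  have hsk : ∀ k : ℕ, (shift^[k] ξ) 0 = ξ (k : ℤ) := fun k => by
    rw [shift_iterate ξ k 0, zero_add]
  have hy1 : ∀ k : ℕ, fIter f0 f1 ξ k x₁ ∈ Icc (0:ℝ) 1 ∧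
      (ξ (k:ℤ) = 1 → d ≤ fIter f0 f1 ξ k x₁) := by
    intro k
    have h5 := orb1 k
    rw [hit1 k] at h5
    exact ⟨h5.1, fun hone => h5.2 (show (shift^[k] ξ) 0 = 1 by rw [hsk k]; exact hone)⟩
  have hy2 : ∀ k : ℕ, fIter f0 f1 ξ k x₂ ∈ Icc (0:ℝ) 1 ∧
      (ξ (k:ℤ) = 1 → d ≤ fIter f0 f1 ξ k x₂) := by
    intro k
    have h5 := orb2 k
    rw [hit2 k] at h5
    exact ⟨h5.1, fun hone => h5.2 (show (shift^[k] ξ) 0 = 1 by rw [hsk k]; exact hone)⟩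
  rcases lt_trichotomy x₁ x₂ with hlt | heq | hgt
  · -- the generic case `x₁ < x₂`
    have hk : ∀ k : ℕ,
        M⁻¹ * (((F f0 f1)^[k] (ξ, x₂)).2 - ((F f0 f1)^[k] (ξ, x₁)).2) ≤
          Real.log ((if ((F f0 f1)^[k] (ξ, x₁)).1 0 = 0 then df0 else df1)
              ((F f0 f1)^[k] (ξ, x₁)).2) -
            Real.log ((if ((F f0 f1)^[k] (ξ, x₂)).1 0 = 0 then df0 else df1)
              ((F f0 f1)^[k] (ξ, x₂)).2) ∧
          Real.log ((if ((F f0 f1)^[k] (ξ, x₁)).1 0 = 0 then df0 else df1)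
              ((F f0 f1)^[k] (ξ, x₁)).2) -
            Real.log ((if ((F f0 f1)^[k] (ξ, x₂)).1 0 = 0 then df0 else df1)
              ((F f0 f1)^[k] (ξ, x₂)).2) ≤
            M * (((F f0 f1)^[k] (ξ, x₂)).2 - ((F f0 f1)^[k] (ξ, x₁)).2) := by
      intro k
      have hab : fIter f0 f1 ξ k x₁ < fIter f0 f1 ξ k x₂ :=
        fIter_lt f0 f1 hH1.mono0 hH1.mono1 ξ k hlt
      simp only [hit1 k, hit2 k, hsk k]
      by_cases hz : ξ (k:ℤ) = 0
      · rw [if_pos hz]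
        exact hB0 _ (hy1 k).1 _ (hy2 k).1 hab
      · rw [if_neg hz]
        have hone : ξ (k:ℤ) = 1 := fin2_eq_one hz
        exact hB1 _ ⟨(hy1 k).2 hone, (hy1 k).1.2⟩ _ ⟨(hy2 k).2 hone, (hy2 k).1.2⟩ hab
    -- averaged bounds
    set L1 : ℕ → ℝ := fun j => (n j : ℝ)⁻¹ * ∑ k ∈ Finset.range (n j),
        Real.log ((if ((F f0 f1)^[k] (ξ, x₁)).1 0 = 0 then df0 else df1)
          ((F f0 f1)^[k] (ξ, x₁)).2) with hL1
    set L2 : ℕ → ℝ := fun j => (n j : ℝ)⁻¹ * ∑ k ∈ Finset.range (n j),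
        Real.log ((if ((F f0 f1)^[k] (ξ, x₂)).1 0 = 0 then df0 else df1)
          ((F f0 f1)^[k] (ξ, x₂)).2) with hL2
    set A1 : ℕ → ℝ := fun j => (n j : ℝ)⁻¹ * ∑ k ∈ Finset.range (n j),
        ((F f0 f1)^[k] (ξ, x₁)).2 with hA1
    set A2 : ℕ → ℝ := fun j => (n j : ℝ)⁻¹ * ∑ k ∈ Finset.range (n j),
        ((F f0 f1)^[k] (ξ, x₂)).2 with hA2
    have hj : ∀ j : ℕ, M⁻¹ * (A2 j - A1 j) ≤ L1 j - L2 j ∧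
        L1 j - L2 j ≤ M * (A2 j - A1 j) := by
      intro j
      have hinv : (0:ℝ) ≤ ((n j : ℝ))⁻¹ := by positivity
      have hs1 := Finset.sum_le_sum (fun k (_ : k ∈ Finset.range (n j)) => (hk k).1)
      have hs2 := Finset.sum_le_sum (fun k (_ : k ∈ Finset.range (n j)) => (hk k).2)
      rw [← Finset.mul_sum, Finset.sum_sub_distrib, Finset.sum_sub_distrib] at hs1
      rw [← Finset.mul_sum, Finset.sum_sub_distrib, Finset.sum_sub_distrib] at hs2
      simp only [hL1, hL2, hA1, hA2]
      constructor
      · calc M⁻¹ * ((n j : ℝ)⁻¹ * ∑ k ∈ Finset.range (n j), ((F f0 f1)^[k] (ξ, x₂)).2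
              - (n j : ℝ)⁻¹ * ∑ k ∈ Finset.range (n j), ((F f0 f1)^[k] (ξ, x₁)).2)
            = (n j : ℝ)⁻¹ * (M⁻¹ * ((∑ k ∈ Finset.range (n j), ((F f0 f1)^[k] (ξ, x₂)).2)
              - ∑ k ∈ Finset.range (n j), ((F f0 f1)^[k] (ξ, x₁)).2)) := by ring
          _ ≤ (n j : ℝ)⁻¹ * ((∑ k ∈ Finset.range (n j),
                Real.log ((if ((F f0 f1)^[k] (ξ, x₁)).1 0 = 0 then df0 else df1)
                  ((F f0 f1)^[k] (ξ, x₁)).2))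
              - ∑ k ∈ Finset.range (n j),
                Real.log ((if ((F f0 f1)^[k] (ξ, x₂)).1 0 = 0 then df0 else df1)
                  ((F f0 f1)^[k] (ξ, x₂)).2)) := mul_le_mul_of_nonneg_left hs1 hinv
          _ = _ := by ring
      · calc (n j : ℝ)⁻¹ * (∑ k ∈ Finset.range (n j),
                Real.log ((if ((F f0 f1)^[k] (ξ, x₁)).1 0 = 0 then df0 else df1)
                  ((F f0 f1)^[k] (ξ, x₁)).2))
              - (n j : ℝ)⁻¹ * ∑ k ∈ Finset.range (n j),
                Real.log ((if ((F f0 f1)^[k] (ξ, x₂)).1 0 = 0 then df0 else df1)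
                  ((F f0 f1)^[k] (ξ, x₂)).2)
            = (n j : ℝ)⁻¹ * ((∑ k ∈ Finset.range (n j),
                Real.log ((if ((F f0 f1)^[k] (ξ, x₁)).1 0 = 0 then df0 else df1)
                  ((F f0 f1)^[k] (ξ, x₁)).2))
              - ∑ k ∈ Finset.range (n j),
                Real.log ((if ((F f0 f1)^[k] (ξ, x₂)).1 0 = 0 then df0 else df1)
                  ((F f0 f1)^[k] (ξ, x₂)).2)) := by ring
          _ ≤ (n j : ℝ)⁻¹ * (M * ((∑ k ∈ Finset.range (n j), ((F f0 f1)^[k] (ξ, x₂)).2)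
              - ∑ k ∈ Finset.range (n j), ((F f0 f1)^[k] (ξ, x₁)).2)) :=
                mul_le_mul_of_nonneg_left hs2 hinv
          _ = _ := by ring
    have tL : Tendsto (fun j => L1 j - L2 j) atTop
        (nhds (lyap df0 df1 μ₁ - lyap df0 df1 μ₂)) := t1g.sub t2g
    have tA : Tendsto (fun j => A2 j - A1 j) atTop
        (nhds ((∫ p, p.2 ∂μ₂) - ∫ p, p.2 ∂μ₁)) := t2h.sub t1h
    have hlow : M⁻¹ * ((∫ p, p.2 ∂μ₂) - ∫ p, p.2 ∂μ₁) ≤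
        lyap df0 df1 μ₁ - lyap df0 df1 μ₂ :=
      le_of_tendsto_of_tendsto' (tA.const_mul M⁻¹) tL (fun j => (hj j).1)
    have hup : lyap df0 df1 μ₁ - lyap df0 df1 μ₂ ≤
        M * ((∫ p, p.2 ∂μ₂) - ∫ p, p.2 ∂μ₁) :=
      le_of_tendsto_of_tendsto' tL (tA.const_mul M) (fun j => (hj j).2)
    have hDpos : 0 < (∫ p, p.2 ∂μ₂) - ∫ p, p.2 ∂μ₁ := sub_pos.2 hord
    exact ⟨(le_div_iff₀ hDpos).2 hlow, (div_le_iff₀ hDpos).2 hup⟩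
  · -- `x₁ = x₂` is impossible
    exfalso
    subst heq
    have := tendsto_nhds_unique t1h t2h
    linarith
  · -- `x₂ < x₁` is impossible
    exfalso
    have hle : ∀ j : ℕ, (n j : ℝ)⁻¹ * ∑ k ∈ Finset.range (n j), ((F f0 f1)^[k] (ξ, x₂)).2
        ≤ (n j : ℝ)⁻¹ * ∑ k ∈ Finset.range (n j), ((F f0 f1)^[k] (ξ, x₁)).2 := by
      intro j
      have hinv : (0:ℝ) ≤ ((n j : ℝ))⁻¹ := by positivity
      refine mul_le_mul_of_nonneg_left (Finset.sum_le_sum fun k _ => ?_) hinv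
      rw [hit1 k, hit2 k]
      exact (fIter_lt f0 f1 hH1.mono0 hH1.mono1 ξ k hgt).le
    have := le_of_tendsto_of_tendsto' t2h t1h hle
    linarith

end DGR
end
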